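/- arXiv:1401.3780 — 4 statements merged into one kernel-verified Lean document; each statement's English description precedes it below -/
import Mathlib

section
/- Let G be a connected graph of order n ≥ 2 and H a family of n connected non-trivial graphs. Then every H_i ∈ H has the property that all of its vertices are twin vertices if and only if dim_2(G⊙H) = Σ_{i=1}^n |V(H_i)|. -/
open SimpleGraph

/-- `S` is a `k`-metric generator for `G`: every pair of distinct vertices is
distinguished (has different distances) by at least `k` vertices of `S`. -/
def kMetricGen {V : Type*} [Fintype V] (G : SimpleGraph V) (k : ℕ) (S : Set V) : Prop :=
  ∀ u v : V, u ≠ v → ∃ T : Finset V, ↑T ⊆ S ∧ k ≤ T.card ∧ ∀ w ∈ T, G.dist u w ≠ G.dist v w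

/-- `G` is `k`-metric dimensional: `k` is the largest integer admitting a `k`-metric generator. -/
def kMetricDimensional {V : Type*} [Fintype V] (G : SimpleGraph V) (k : ℕ) : Prop :=
  (∃ S : Set V, kMetricGen G k S) ∧ ∀ k' : ℕ, (∃ S : Set V, kMetricGen G k' S) → k' ≤ k

/-- The `k`-metric dimension of `G`. -/
noncomputable def kMetricDim {V : Type*} [Fintype V] (G : SimpleGraph V) (k : ℕ) : ℕ :=
  sInf {m | ∃ S : Finset V, kMetricGen G k ↑S ∧ S.card = m}

/-- A `k`-metric basis: a minimum-cardinality `k`-metric generator. -/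
def kMetricBasis {V : Type*} [Fintype V] (G : SimpleGraph V) (k : ℕ) (B : Finset V) : Prop :=
  kMetricGen G k ↑B ∧ ∀ T : Finset V, kMetricGen G k ↑T → B.card ≤ T.card

/-- Auxiliary relation for the corona product. -/
def coronaRel {V : Type*} {W : V → Type*} (G : SimpleGraph V) (H : ∀ v, SimpleGraph (W v)) :
    (V ⊕ (Σ v, W v)) → (V ⊕ (Σ v, W v)) → Prop
  | Sum.inl a, Sum.inl b => G.Adj a b
  | Sum.inl a, Sum.inr b => a = b.1
  | Sum.inr a, Sum.inr b => ∃ h : a.1 = b.1, (H b.1).Adj (h ▸ a.2) b.2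
  | _, _ => False

/-- The corona product `G ⊙ 𝓗`: one copy of `G`, and each vertex `v` of `G` joined by an
edge to every vertex of its own copy of `H v`. -/
def corona {V : Type*} {W : V → Type*} (G : SimpleGraph V) (H : ∀ v, SimpleGraph (W v)) :
    SimpleGraph (V ⊕ (Σ v, W v)) :=
  SimpleGraph.fromRel (coronaRel G H)

/-- The join `K₁ + H`: a new vertex (`none`) adjacent to every vertex of `H`. -/
def K1join {U : Type*} (H : SimpleGraph U) : SimpleGraph (Option U) :=
  SimpleGraph.fromRel (fun x y => match x, y with
    | none, some _ => True
    | some a, some b => H.Adj a b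
    | _, _ => False)

/-- `𝒞(H) = min_{x ≠ y} |(N(x) △ N(y)) ∪ {x,y}|`. -/
noncomputable def CC {U : Type*} (H : SimpleGraph U) : ℕ :=
  sInf {m | ∃ x y : U, x ≠ y ∧
    (symmDiff (H.neighborSet x) (H.neighborSet y) ∪ {x, y}).ncard = m}

section CoronaAux

variable {V : Type*} {W : V → Type*} (G : SimpleGraph V) (H : ∀ v, SimpleGraph (W v))

/-- The projection of the corona vertex set onto `V`. -/
def coronaProj : (V ⊕ (Σ v, W v)) → V := Sum.elim id Sigma.fst

lemma coronaRel_inl_inl {a b : V} : coronaRel G H (Sum.inl a) (Sum.inl b) = G.Adj a b := rfl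

lemma coronaRel_inl_inr {a : V} {b : Σ v, W v} :
    coronaRel G H (Sum.inl a) (Sum.inr b) = (a = b.1) := rfl

lemma coronaRel_inr_inl {a : V} {b : Σ v, W v} :
    coronaRel G H (Sum.inr b) (Sum.inl a) = False := rfl

lemma coronaRel_inr_inr {a b : Σ v, W v} :
    coronaRel G H (Sum.inr a) (Sum.inr b) =
      (∃ h : a.1 = b.1, (H b.1).Adj (h ▸ a.2) b.2) := rfl

lemma corona_adj_inl_inl {a b : V} :
    (corona G H).Adj (Sum.inl a) (Sum.inl b) ↔ G.Adj a b := by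
  rw [corona, fromRel_adj, coronaRel_inl_inl, coronaRel_inl_inl]
  constructor
  · rintro ⟨-, h | h⟩
    · exact h
    · exact h.symm
  · intro h
    exact ⟨by simpa using h.ne, Or.inl h⟩

lemma corona_adj_inl_inr {a : V} {b : Σ v, W v} :
    (corona G H).Adj (Sum.inl a) (Sum.inr b) ↔ a = b.1 := by
  rw [corona, fromRel_adj, coronaRel_inl_inr, coronaRel_inr_inl]
  constructor
  · rintro ⟨-, h | h⟩
    · exact h
    · exact h.elim
  · intro h
    exact ⟨by simp, Or.inl h⟩

lemma corona_adj_inr_inr_same {a : V} {x y : W a} :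
    (corona G H).Adj (Sum.inr ⟨a, x⟩) (Sum.inr ⟨a, y⟩) ↔ (H a).Adj x y := by
  rw [corona, fromRel_adj, coronaRel_inr_inr, coronaRel_inr_inr]
  constructor
  · rintro ⟨-, ⟨h, hadj⟩ | ⟨h, hadj⟩⟩
    · exact hadj
    · exact hadj.symm
  · intro h
    refine ⟨?_, Or.inl ⟨rfl, h⟩⟩
    intro hc
    apply h.ne
    simpa using hc

lemma corona_not_adj_inr_inr_ne {a b : V} {x : W a} {y : W b} (hab : a ≠ b) :
    ¬ (corona G H).Adj (Sum.inr ⟨a, x⟩) (Sum.inr ⟨b, y⟩) := by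
  rw [corona, fromRel_adj, coronaRel_inr_inr, coronaRel_inr_inr]
  rintro ⟨-, ⟨h, -⟩ | ⟨h, -⟩⟩
  · exact hab h
  · exact hab h.symm

lemma corona_adj_cases {u w : V ⊕ (Σ v, W v)} (h : (corona G H).Adj u w) :
    (∃ a b, u = Sum.inl a ∧ w = Sum.inl b ∧ G.Adj a b) ∨
    (∃ (a : V) (x : W a), u = Sum.inl a ∧ w = Sum.inr ⟨a, x⟩) ∨
    (∃ (a : V) (x : W a), u = Sum.inr ⟨a, x⟩ ∧ w = Sum.inl a) ∨
    (∃ (a : V) (x y : W a), u = Sum.inr ⟨a, x⟩ ∧ w = Sum.inr ⟨a, y⟩ ∧ (H a).Adj x y) := by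
  rcases u with a | ⟨a, x⟩ <;> rcases w with b | ⟨b, y⟩
  · exact Or.inl ⟨a, b, rfl, rfl, (corona_adj_inl_inl G H).1 h⟩
  · have hab : a = b := (corona_adj_inl_inr G H).1 h
    subst hab
    exact Or.inr (Or.inl ⟨a, y, rfl, rfl⟩)
  · have hba : b = a := (corona_adj_inl_inr G H).1 h.symm
    subst hba
    exact Or.inr (Or.inr (Or.inl ⟨b, x, rfl, rfl⟩))
  · by_cases hab : a = b
    · subst hab
      exact Or.inr (Or.inr (Or.inr ⟨a, x, y, rfl, rfl, (corona_adj_inr_inr_same G H).1 h⟩))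
    · exact absurd h (corona_not_adj_inr_inr_ne G H hab)

/-- The embedding of `G` into the corona. -/
def coronaInl : G →g corona G H :=
  ⟨Sum.inl, fun h => (corona_adj_inl_inl G H).2 h⟩

lemma corona_connected (hG : G.Connected) : (corona G H).Connected := by
  have hne : Nonempty V := hG.nonempty
  rw [connected_iff]
  refine ⟨fun u w => ?_, ⟨Sum.inl hne.some⟩⟩
  have base : ∀ a b : V, (corona G H).Reachable (Sum.inl a) (Sum.inl b) :=
    fun a b => Reachable.map (coronaInl G H) (hG.preconnected a b)
  have step : ∀ u, (corona G H).Reachable u (Sum.inl (coronaProj u)) := by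
    rintro (a | ⟨a, x⟩)
    · exact Reachable.refl _
    · exact (((corona_adj_inl_inr G H).2 rfl).symm).reachable
  exact ((step u).trans (base _ _)).trans (step w).symm

private lemma pot_walk {V' : Type*} {G' : SimpleGraph V'} {f : V' → ℕ}
    (hf : ∀ ⦃a b⦄, G'.Adj a b → f b ≤ f a + 1) {u v : V'} (p : G'.Walk u v) :
    f v ≤ f u + p.length := by
  induction p with
  | nil => simp
  | cons h p ih =>
      have := hf h
      rw [Walk.length_cons]
      omega

private lemma pot_dist {V' : Type*} {G' : SimpleGraph V'} (hc : G'.Connected) {f : V' → ℕ}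
    (hf : ∀ ⦃a b⦄, G'.Adj a b → f b ≤ f a + 1) (u v : V') :
    f v ≤ f u + G'.dist u v := by
  obtain ⟨p, hp⟩ := hc.exists_walk_length_eq_dist u v
  rw [← hp]
  exact pot_walk hf p

lemma corona_dist_inl_inl (hG : G.Connected) (a b : V) :
    (corona G H).dist (Sum.inl a) (Sum.inl b) = G.dist a b := by
  apply le_antisymm
  · obtain ⟨p, hp⟩ := hG.exists_walk_length_eq_dist a b
    have := dist_le (p.map (coronaInl G H))
    rwa [Walk.length_map, hp] at this
  · have hf : ∀ ⦃u' v'⦄, (corona G H).Adj u' v' →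
        G.dist a (coronaProj v') ≤ G.dist a (coronaProj u') + 1 := by
      intro u' v' h
      rcases corona_adj_cases G H h with ⟨c, d, rfl, rfl, hcd⟩ | ⟨c, z, rfl, rfl⟩ |
        ⟨c, z, rfl, rfl⟩ | ⟨c, z, z', rfl, rfl, -⟩
      · have h1 := hG.dist_triangle (u := a) (v := c) (w := d)
        have h2 : G.dist c d = 1 := dist_eq_one_iff_adj.2 hcd
        simp only [coronaProj, Sum.elim_inl, id]
        omega
      all_goals simp [coronaProj]
    have := pot_dist (corona_connected G H hG) hf (Sum.inl a) (Sum.inl b)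
    simpa [coronaProj, SimpleGraph.dist_self] using this

lemma corona_dist_inl_inr (hG : G.Connected) (a b : V) (y : W b) :
    (corona G H).dist (Sum.inl a) (Sum.inr ⟨b, y⟩) = G.dist a b + 1 := by
  apply le_antisymm
  · obtain ⟨p, hp⟩ := hG.exists_walk_length_eq_dist a b
    have hadj : (corona G H).Adj (Sum.inl b) (Sum.inr ⟨b, y⟩) :=
      (corona_adj_inl_inr G H).2 rfl
    have := dist_le ((p.map (coronaInl G H)).concat hadj)
    have hl : ((p.map (coronaInl G H)).concat hadj).length = G.dist a b + 1 :=
      (Walk.length_concat ..).trans (by rw [Walk.length_map, hp])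
    exact this.trans_eq hl
  · set f : (V ⊕ (Σ v, W v)) → ℕ :=
      Sum.elim (fun c => G.dist a c) (fun c => G.dist a c.1 + 1) with hfdef
    have hf : ∀ ⦃u' v'⦄, (corona G H).Adj u' v' → f v' ≤ f u' + 1 := by
      intro u' v' h
      rcases corona_adj_cases G H h with ⟨c, d, rfl, rfl, hcd⟩ | ⟨c, z, rfl, rfl⟩ |
        ⟨c, z, rfl, rfl⟩ | ⟨c, z, z', rfl, rfl, -⟩
      · have h1 := hG.dist_triangle (u := a) (v := c) (w := d)
        have h2 : G.dist c d = 1 := dist_eq_one_iff_adj.2 hcd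
        simp only [hfdef, Sum.elim_inl]
        omega
      all_goals (simp [hfdef]; try omega)
    have := pot_dist (corona_connected G H hG) hf (Sum.inl a) (Sum.inr ⟨b, y⟩)
    simpa [hfdef, SimpleGraph.dist_self] using this

lemma corona_dist_inr_inr_ne (hG : G.Connected) {a b : V} (x : W a) (y : W b) (hab : a ≠ b) :
    (corona G H).dist (Sum.inr ⟨a, x⟩) (Sum.inr ⟨b, y⟩) = G.dist a b + 2 := by
  classical
  apply le_antisymm
  · obtain ⟨p, hp⟩ := hG.exists_walk_length_eq_dist a b
    have h1 : (corona G H).Adj (Sum.inr ⟨a, x⟩) (Sum.inl a) :=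
      ((corona_adj_inl_inr G H).2 rfl).symm
    have h2 : (corona G H).Adj (Sum.inl b) (Sum.inr ⟨b, y⟩) :=
      (corona_adj_inl_inr G H).2 rfl
    have := dist_le (Walk.cons h1 ((p.map (coronaInl G H)).concat h2))
    have hl : (Walk.cons h1 ((p.map (coronaInl G H)).concat h2)).length = G.dist a b + 1 + 1 :=
      (Walk.length_cons ..).trans (congrArg (· + 1)
        ((Walk.length_concat ..).trans (congrArg (· + 1) ((Walk.length_map ..).trans hp))))
    have := this.trans_eq hl
    omega
  · set f : (V ⊕ (Σ v, W v)) → ℕ :=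
      Sum.elim (fun c => G.dist a c + 1)
        (fun c => if c.1 = a then 0 else G.dist a c.1 + 2) with hfdef
    have hf : ∀ ⦃u' v'⦄, (corona G H).Adj u' v' → f v' ≤ f u' + 1 := by
      intro u' v' h
      rcases corona_adj_cases G H h with ⟨c, d, rfl, rfl, hcd⟩ | ⟨c, z, rfl, rfl⟩ |
        ⟨c, z, rfl, rfl⟩ | ⟨c, z, z', rfl, rfl, -⟩
      · have h1 := hG.dist_triangle (u := a) (v := c) (w := d)
        have h2 : G.dist c d = 1 := dist_eq_one_iff_adj.2 hcd
        simp only [hfdef, Sum.elim_inl]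
        omega
      · by_cases hc : c = a
        · subst hc
          simp [hfdef]
        · simp [hfdef, hc]
      · by_cases hc : c = a
        · subst hc
          simp [hfdef, SimpleGraph.dist_self]
        · simp [hfdef, hc]
      · simp [hfdef]
    have h1 : f (Sum.inr ⟨a, x⟩) = 0 := by simp [hfdef]
    have h2 : f (Sum.inr ⟨b, y⟩) = G.dist a b + 2 := by simp [hfdef, Ne.symm hab]
    have := pot_dist (corona_connected G H hG) hf (Sum.inr ⟨a, x⟩) (Sum.inr ⟨b, y⟩)
    rw [h1, h2] at this
    omega

open Classical in
lemma corona_dist_inr_inr_same (hG : G.Connected) {a : V} {x y : W a} (hxy : x ≠ y) :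
    (corona G H).dist (Sum.inr ⟨a, x⟩) (Sum.inr ⟨a, y⟩) =
      if (H a).Adj x y then 1 else 2 := by
  classical
  have hCc := corona_connected G H hG
  by_cases h : (H a).Adj x y
  · rw [if_pos h]
    exact dist_eq_one_iff_adj.2 ((corona_adj_inr_inr_same G H).2 h)
  · rw [if_neg h]
    have hne : (Sum.inr ⟨a, x⟩ : V ⊕ (Σ v, W v)) ≠ Sum.inr ⟨a, y⟩ := by
      intro hc
      apply hxy
      simpa using hc
    have h0 : (corona G H).dist (Sum.inr ⟨a, x⟩) (Sum.inr ⟨a, y⟩) ≠ 0 :=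
      (hCc.pos_dist_of_ne hne).ne'
    have h1 : (corona G H).dist (Sum.inr ⟨a, x⟩) (Sum.inr ⟨a, y⟩) ≠ 1 := by
      intro hc
      rw [dist_eq_one_iff_adj, corona_adj_inr_inr_same] at hc
      exact h hc
    have h2 : (corona G H).dist (Sum.inr ⟨a, x⟩) (Sum.inr ⟨a, y⟩) ≤ 2 := by
      have e1 : (corona G H).Adj (Sum.inr ⟨a, x⟩) (Sum.inl a) :=
        ((corona_adj_inl_inr G H).2 rfl).symm
      have e2 : (corona G H).Adj (Sum.inl a) (Sum.inr ⟨a, y⟩) :=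
        (corona_adj_inl_inr G H).2 rfl
      have := dist_le (Walk.cons e1 (Walk.cons e2 Walk.nil))
      simpa using this
    omega

lemma inr_ne_of_ne {a b : V} {x : W a} {y : W b} (h : a ≠ b) :
    (Sum.inr ⟨a, x⟩ : V ⊕ (Σ v, W v)) ≠ Sum.inr ⟨b, y⟩ :=
  fun hc => h (congrArg (coronaProj (W := W)) hc)

lemma inr_ne_of_snd_ne {a : V} {x y : W a} (h : x ≠ y) :
    (Sum.inr ⟨a, x⟩ : V ⊕ (Σ v, W v)) ≠ Sum.inr ⟨a, y⟩ := by
  intro hc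
  apply h
  simpa using hc

/-- If `x` and `y` are twins in `H v`, no vertex of the corona other than the corresponding
two vertices distinguishes them. -/
lemma twin_indist (hG : G.Connected) {v : V} {x y : W v} (hxy : x ≠ y)
    (htwin : (H v).neighborSet x = (H v).neighborSet y ∨
      insert x ((H v).neighborSet x) = insert y ((H v).neighborSet y)) :
    ∀ w, w ≠ Sum.inr ⟨v, x⟩ → w ≠ Sum.inr ⟨v, y⟩ →
      (corona G H).dist (Sum.inr ⟨v, x⟩) w = (corona G H).dist (Sum.inr ⟨v, y⟩) w := by
  classical
  rintro (a | ⟨b, z⟩) hwx hwy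
  · have e1 := corona_dist_inl_inr G H hG a v x
    have e2 := corona_dist_inl_inr G H hG a v y
    rw [dist_comm] at e1 e2
    rw [e1, e2]
  · by_cases hbv : b = v
    · subst hbv
      have hzx : z ≠ x := by
        intro hc; exact hwx (by rw [hc])
      have hzy : z ≠ y := by
        intro hc; exact hwy (by rw [hc])
      rw [corona_dist_inr_inr_same G H hG (Ne.symm hzx),
        corona_dist_inr_inr_same G H hG (Ne.symm hzy)]
      have hadj : (H b).Adj x z ↔ (H b).Adj y z := by
        rcases htwin with h | h
        · rw [← SimpleGraph.mem_neighborSet, ← SimpleGraph.mem_neighborSet, h]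
        · have h1 : (H b).Adj x z ↔ z ∈ insert x ((H b).neighborSet x) := by
            simp [Set.mem_insert_iff, hzx]
          have h2 : (H b).Adj y z ↔ z ∈ insert y ((H b).neighborSet y) := by
            simp [Set.mem_insert_iff, hzy]
          rw [h1, h2, h]
      simp only [hadj]
    · rw [corona_dist_inr_inr_ne G H hG x z (Ne.symm hbv),
        corona_dist_inr_inr_ne G H hG y z (Ne.symm hbv)]

/-- Any two vertices belonging to a set are distinguished (twice) inside that set. -/
lemma exists_T_of_both {V' : Type*} {G' : SimpleGraph V'} (hc : G'.Connected)
    {S : Set V'} {u w : V'} (hu : u ∈ S) (hw : w ∈ S) (huw : u ≠ w) :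
    ∃ T : Finset V', ↑T ⊆ S ∧ 2 ≤ T.card ∧ ∀ t ∈ T, G'.dist u t ≠ G'.dist w t := by
  classical
  refine ⟨{u, w}, ?_, by rw [Finset.card_pair huw], ?_⟩
  · intro t ht
    simp only [Finset.coe_insert, Finset.coe_singleton, Set.mem_insert_iff,
      Set.mem_singleton_iff] at ht
    rcases ht with rfl | rfl
    exacts [hu, hw]
  · intro t ht
    simp only [Finset.mem_insert, Finset.mem_singleton] at ht
    rcases ht with rfl | rfl
    · rw [SimpleGraph.dist_self]
      exact (hc.pos_dist_of_ne (Ne.symm huw)).ne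
    · rw [SimpleGraph.dist_self (v := t)]
      exact (hc.pos_dist_of_ne huw).ne'

lemma exists_separator {U : Type*} (K : SimpleGraph U) {x y : U}
    (hopen : K.neighborSet x ≠ K.neighborSet y)
    (hclosed : insert x (K.neighborSet x) ≠ insert y (K.neighborSet y)) :
    ∃ z, z ≠ x ∧ z ≠ y ∧ ¬ (K.Adj x z ↔ K.Adj y z) := by
  by_cases hadj : K.Adj x y
  · simp only [ne_eq, Set.ext_iff, not_forall] at hclosed
    obtain ⟨z, hz⟩ := hclosed
    have hzx : z ≠ x := by
      rintro rfl
      exact hz (iff_of_true (Set.mem_insert _ _)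
        (Set.mem_insert_of_mem _ ((K.mem_neighborSet y z).2 hadj.symm)))
    have hzy : z ≠ y := by
      rintro rfl
      exact hz (iff_of_true (Set.mem_insert_of_mem _ ((K.mem_neighborSet x z).2 hadj))
        (Set.mem_insert _ _))
    refine ⟨z, hzx, hzy, fun hiff => hz ?_⟩
    simp only [Set.mem_insert_iff, SimpleGraph.mem_neighborSet, hzx, hzy, false_or]
    exact hiff
  · simp only [ne_eq, Set.ext_iff, not_forall] at hopen
    obtain ⟨z, hz⟩ := hopen
    have hzx : z ≠ x := by
      rintro rfl
      exact hz (iff_of_false (fun hc => K.irrefl hc) (fun hc => hadj hc.symm))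
    have hzy : z ≠ y := by
      rintro rfl
      exact hz (iff_of_false (fun hc => hadj hc) (fun hc => K.irrefl hc))
    refine ⟨z, hzx, hzy, fun hiff => hz ?_⟩
    simpa only [SimpleGraph.mem_neighborSet] using hiff
end CoronaAux

section GenLemmas

variable {V : Type*} [Fintype V] {W : V → Type*} [∀ v, Fintype (W v)]
  [∀ v, Nontrivial (W v)] (G : SimpleGraph V) (H : ∀ v, SimpleGraph (W v))

lemma genA (hG : G.Connected) (hVnt : Nontrivial V) :
    kMetricGen (corona G H) 2 (Set.range Sum.inr) := by
  classical
  have hC := corona_connected G H hG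
  have hMixed : ∀ (a b : V) (yb : W b),
      ∃ T : Finset (V ⊕ (Σ v, W v)), ↑T ⊆ Set.range (Sum.inr : (Σ v, W v) → V ⊕ (Σ v, W v)) ∧ 2 ≤ T.card ∧
        ∀ t ∈ T, (corona G H).dist (Sum.inl a) t ≠ (corona G H).dist (Sum.inr ⟨b, yb⟩) t := by
    intro a b yb
    by_cases hab : a = b
    · subst hab
      obtain ⟨c, hc⟩ := exists_ne a
      obtain ⟨zc⟩ : Nonempty (W c) := inferInstance
      refine ⟨{Sum.inr ⟨a, yb⟩, Sum.inr ⟨c, zc⟩}, ?_, ?_, ?_⟩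
      · intro t ht
        simp only [Finset.coe_insert, Finset.coe_singleton, Set.mem_insert_iff,
          Set.mem_singleton_iff] at ht
        rcases ht with rfl | rfl <;> exact Set.mem_range_self _
      · rw [Finset.card_pair (inr_ne_of_ne (Ne.symm hc))]
      · intro t ht
        simp only [Finset.mem_insert, Finset.mem_singleton] at ht
        rcases ht with rfl | rfl
        · rw [corona_dist_inl_inr G H hG, SimpleGraph.dist_self, SimpleGraph.dist_self]
          omega
        · rw [corona_dist_inl_inr G H hG,
            corona_dist_inr_inr_ne G H hG yb zc (Ne.symm hc)]
          omega
    · obtain ⟨za⟩ : Nonempty (W a) := inferInstance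
      refine ⟨{Sum.inr ⟨a, za⟩, Sum.inr ⟨b, yb⟩}, ?_, ?_, ?_⟩
      · intro t ht
        simp only [Finset.coe_insert, Finset.coe_singleton, Set.mem_insert_iff,
          Set.mem_singleton_iff] at ht
        rcases ht with rfl | rfl <;> exact Set.mem_range_self _
      · rw [Finset.card_pair (inr_ne_of_ne hab)]
      · intro t ht
        simp only [Finset.mem_insert, Finset.mem_singleton] at ht
        rcases ht with rfl | rfl
        · rw [corona_dist_inl_inr G H hG, SimpleGraph.dist_self,
            corona_dist_inr_inr_ne G H hG yb za (Ne.symm hab)]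
          omega
        · rw [corona_dist_inl_inr G H hG, SimpleGraph.dist_self]
          have := hG.pos_dist_of_ne hab
          omega
  have swap : ∀ {u w : V ⊕ (Σ v, W v)},
      (∃ T : Finset (V ⊕ (Σ v, W v)), ↑T ⊆ Set.range (Sum.inr : (Σ v, W v) → V ⊕ (Σ v, W v)) ∧
        2 ≤ T.card ∧ ∀ t ∈ T, (corona G H).dist u t ≠ (corona G H).dist w t) →
      (∃ T : Finset (V ⊕ (Σ v, W v)), ↑T ⊆ Set.range (Sum.inr : (Σ v, W v) → V ⊕ (Σ v, W v)) ∧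
        2 ≤ T.card ∧ ∀ t ∈ T, (corona G H).dist w t ≠ (corona G H).dist u t) := by
    rintro u w ⟨T, h1, h2, h3⟩
    exact ⟨T, h1, h2, fun t ht => (h3 t ht).symm⟩
  intro u w huw
  rcases u with a | ⟨a, xa⟩ <;> rcases w with b | ⟨b, yb⟩
  · -- inl / inl
    have hab : a ≠ b := fun h => huw (by rw [h])
    obtain ⟨za⟩ : Nonempty (W a) := inferInstance
    obtain ⟨zb⟩ : Nonempty (W b) := inferInstance
    refine ⟨{Sum.inr ⟨a, za⟩, Sum.inr ⟨b, zb⟩}, ?_, ?_, ?_⟩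
    · intro t ht
      simp only [Finset.coe_insert, Finset.coe_singleton, Set.mem_insert_iff,
        Set.mem_singleton_iff] at ht
      rcases ht with rfl | rfl <;> exact Set.mem_range_self _
    · rw [Finset.card_pair (inr_ne_of_ne hab)]
    · intro t ht
      simp only [Finset.mem_insert, Finset.mem_singleton] at ht
      rcases ht with rfl | rfl
      · rw [corona_dist_inl_inr G H hG, corona_dist_inl_inr G H hG,
          SimpleGraph.dist_self]
        have := hG.pos_dist_of_ne (Ne.symm hab)
        omega
      · rw [corona_dist_inl_inr G H hG, corona_dist_inl_inr G H hG,
          SimpleGraph.dist_self]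
        have := hG.pos_dist_of_ne hab
        omega
  · exact hMixed a b yb
  · exact swap (hMixed b a xa)
  · exact exists_T_of_both hC (Set.mem_range_self _) (Set.mem_range_self _) huw

lemma genErase (hG : G.Connected) (hVnt : Nontrivial V) (v : V) (x : W v)
    (hx : ∀ y : W v, y ≠ x → (H v).neighborSet x ≠ (H v).neighborSet y ∧
      insert x ((H v).neighborSet x) ≠ insert y ((H v).neighborSet y)) :
    kMetricGen (corona G H) 2
      (Set.range Sum.inr \ {(Sum.inr ⟨v, x⟩ : V ⊕ (Σ v, W v))}) := by
  classical
  have hC := corona_connected G H hG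
  set S : Set (V ⊕ (Σ v, W v)) :=
    Set.range Sum.inr \ {(Sum.inr ⟨v, x⟩ : V ⊕ (Σ v, W v))} with hSdef
  have hmem : ∀ (b : V) (y : W b),
      (Sum.inr ⟨b, y⟩ : V ⊕ (Σ v, W v)) ≠ Sum.inr ⟨v, x⟩ → Sum.inr ⟨b, y⟩ ∈ S :=
    fun b y h => ⟨Set.mem_range_self _, h⟩
  have hmem1 : ∀ (b : V) (y : W b), b ≠ v → (Sum.inr ⟨b, y⟩ : V ⊕ (Σ v, W v)) ∈ S :=
    fun b y hb => hmem b y (inr_ne_of_ne hb)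
  have hmem2 : ∀ (y : W v), y ≠ x → (Sum.inr ⟨v, y⟩ : V ⊕ (Σ v, W v)) ∈ S :=
    fun y hy => hmem v y (inr_ne_of_snd_ne hy)
  have hforce : ∀ (b : V) (y : W b), (Sum.inr ⟨b, y⟩ : V ⊕ (Σ v, W v)) ∉ S →
      (Sum.inr ⟨b, y⟩ : V ⊕ (Σ v, W v)) = Sum.inr ⟨v, x⟩ := by
    intro b y h
    by_contra hne
    exact h (hmem b y hne)
  have pick : ∀ a : V, ∃ z : W a, (Sum.inr ⟨a, z⟩ : V ⊕ (Σ v, W v)) ∈ S := by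
    intro a
    by_cases ha : a = v
    · subst ha
      obtain ⟨z, hz⟩ := exists_ne x
      exact ⟨z, hmem2 z hz⟩
    · obtain ⟨z⟩ : Nonempty (W a) := inferInstance
      exact ⟨z, hmem1 a z ha⟩
  -- same-copy pairs, with the second vertex known to lie in S
  have core : ∀ (a : V) (xa yb : W a), xa ≠ yb → (Sum.inr ⟨a, yb⟩ : V ⊕ (Σ v, W v)) ∈ S →
      ∃ T : Finset (V ⊕ (Σ v, W v)), ↑T ⊆ S ∧ 2 ≤ T.card ∧
        ∀ t ∈ T, (corona G H).dist (Sum.inr ⟨a, xa⟩) t ≠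
          (corona G H).dist (Sum.inr ⟨a, yb⟩) t := by
    intro a xa yb hxy hw
    by_cases hu : (Sum.inr ⟨a, xa⟩ : V ⊕ (Σ v, W v)) ∈ S
    · exact exists_T_of_both hC hu hw (inr_ne_of_snd_ne hxy)
    · have heq := hforce a xa hu
      have hav : a = v := congrArg (coronaProj (W := W)) heq
      subst hav
      have hxx : xa = x := by simpa using heq
      subst hxx
      have hybx : yb ≠ xa := Ne.symm hxy
      obtain ⟨hopen, hclosed⟩ := hx yb hybx
      obtain ⟨z, hzx, hzyb, hzsep⟩ := exists_separator (H a) hopen hclosed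
      refine ⟨{Sum.inr ⟨a, yb⟩, Sum.inr ⟨a, z⟩}, ?_, ?_, ?_⟩
      · intro t ht
        simp only [Finset.coe_insert, Finset.coe_singleton, Set.mem_insert_iff,
          Set.mem_singleton_iff] at ht
        rcases ht with rfl | rfl
        · exact hw
        · exact hmem2 z hzx
      · rw [Finset.card_pair (inr_ne_of_snd_ne (Ne.symm hzyb))]
      · intro t ht
        simp only [Finset.mem_insert, Finset.mem_singleton] at ht
        rcases ht with rfl | rfl
        · rw [corona_dist_inr_inr_same G H hG hxy, SimpleGraph.dist_self]
          split_ifs <;> omega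
        · rw [corona_dist_inr_inr_same G H hG (Ne.symm hzx),
            corona_dist_inr_inr_same G H hG (Ne.symm hzyb)]
          by_cases hA : (H a).Adj xa z
          · have hB : ¬ (H a).Adj yb z := fun hB => hzsep ⟨fun _ => hB, fun _ => hA⟩
            rw [if_pos hA, if_neg hB]
            omega
          · have hB : (H a).Adj yb z := by
              by_contra hB
              exact hzsep ⟨fun h => absurd h hA, fun h => absurd h hB⟩
            rw [if_neg hA, if_pos hB]
            omega
  -- different-copy inr pairs, with the second vertex known to lie in S
  have coreNe : ∀ (a b : V) (xa : W a) (yb : W b), a ≠ b →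
      (Sum.inr ⟨b, yb⟩ : V ⊕ (Σ v, W v)) ∈ S →
      ∃ T : Finset (V ⊕ (Σ v, W v)), ↑T ⊆ S ∧ 2 ≤ T.card ∧
        ∀ t ∈ T, (corona G H).dist (Sum.inr ⟨a, xa⟩) t ≠
          (corona G H).dist (Sum.inr ⟨b, yb⟩) t := by
    intro a b xa yb hab hw
    by_cases hu : (Sum.inr ⟨a, xa⟩ : V ⊕ (Σ v, W v)) ∈ S
    · exact exists_T_of_both hC hu hw (inr_ne_of_ne hab)
    · have heq := hforce a xa hu
      have hav : a = v := congrArg (coronaProj (W := W)) heq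
      subst hav
      obtain ⟨z, hz⟩ := exists_ne yb
      refine ⟨{Sum.inr ⟨b, yb⟩, Sum.inr ⟨b, z⟩}, ?_, ?_, ?_⟩
      · intro t ht
        simp only [Finset.coe_insert, Finset.coe_singleton, Set.mem_insert_iff,
          Set.mem_singleton_iff] at ht
        rcases ht with rfl | rfl
        · exact hw
        · exact hmem1 b z (Ne.symm hab)
      · rw [Finset.card_pair (inr_ne_of_snd_ne (Ne.symm hz))]
      · intro t ht
        simp only [Finset.mem_insert, Finset.mem_singleton] at ht
        rcases ht with rfl | rfl
        · rw [corona_dist_inr_inr_ne G H hG xa yb hab, SimpleGraph.dist_self]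
          omega
        · rw [corona_dist_inr_inr_ne G H hG xa z hab,
            corona_dist_inr_inr_same G H hG (Ne.symm hz)]
          have := hG.pos_dist_of_ne hab
          split_ifs <;> omega
  have hMixed : ∀ (a b : V) (yb : W b),
      ∃ T : Finset (V ⊕ (Σ v, W v)), ↑T ⊆ S ∧ 2 ≤ T.card ∧
        ∀ t ∈ T, (corona G H).dist (Sum.inl a) t ≠ (corona G H).dist (Sum.inr ⟨b, yb⟩) t := by
    intro a b yb
    by_cases hab : a = b
    · subst hab
      by_cases hw : (Sum.inr ⟨a, yb⟩ : V ⊕ (Σ v, W v)) ∈ S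
      · obtain ⟨c, hc⟩ := exists_ne a
        obtain ⟨zc, hzc⟩ := pick c
        refine ⟨{Sum.inr ⟨a, yb⟩, Sum.inr ⟨c, zc⟩}, ?_, ?_, ?_⟩
        · intro t ht
          simp only [Finset.coe_insert, Finset.coe_singleton, Set.mem_insert_iff,
            Set.mem_singleton_iff] at ht
          rcases ht with rfl | rfl
          exacts [hw, hzc]
        · rw [Finset.card_pair (inr_ne_of_ne (Ne.symm hc))]
        · intro t ht
          simp only [Finset.mem_insert, Finset.mem_singleton] at ht
          rcases ht with rfl | rfl
          · rw [corona_dist_inl_inr G H hG, SimpleGraph.dist_self,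
              SimpleGraph.dist_self]
            omega
          · rw [corona_dist_inl_inr G H hG,
              corona_dist_inr_inr_ne G H hG yb zc (Ne.symm hc)]
            omega
      · have heq := hforce a yb hw
        have hav : a = v := congrArg (coronaProj (W := W)) heq
        subst hav
        obtain ⟨c, hc⟩ := exists_ne a
        obtain ⟨z1, z2, hz12⟩ := exists_pair_ne (W c)
        refine ⟨{Sum.inr ⟨c, z1⟩, Sum.inr ⟨c, z2⟩}, ?_, ?_, ?_⟩
        · intro t ht
          simp only [Finset.coe_insert, Finset.coe_singleton, Set.mem_insert_iff,
            Set.mem_singleton_iff] at ht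
          rcases ht with rfl | rfl <;> exact hmem1 c _ hc
        · rw [Finset.card_pair (inr_ne_of_snd_ne hz12)]
        · intro t ht
          simp only [Finset.mem_insert, Finset.mem_singleton] at ht
          rcases ht with rfl | rfl <;>
            · rw [corona_dist_inl_inr G H hG,
                corona_dist_inr_inr_ne G H hG yb _ (Ne.symm hc)]
              omega
    · by_cases hav : a = v
      · subst hav
        obtain ⟨z, hz⟩ := pick a
        refine ⟨{Sum.inr ⟨b, yb⟩, Sum.inr ⟨a, z⟩}, ?_, ?_, ?_⟩
        · intro t ht
          simp only [Finset.coe_insert, Finset.coe_singleton, Set.mem_insert_iff,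
            Set.mem_singleton_iff] at ht
          rcases ht with rfl | rfl
          exacts [hmem1 b yb (Ne.symm hab), hz]
        · rw [Finset.card_pair (inr_ne_of_ne (Ne.symm hab))]
        · intro t ht
          simp only [Finset.mem_insert, Finset.mem_singleton] at ht
          rcases ht with rfl | rfl
          · rw [corona_dist_inl_inr G H hG, SimpleGraph.dist_self]
            have := hG.pos_dist_of_ne hab
            omega
          · rw [corona_dist_inl_inr G H hG, SimpleGraph.dist_self,
              corona_dist_inr_inr_ne G H hG yb z (Ne.symm hab)]
            omega
      · obtain ⟨z1, z2, hz12⟩ := exists_pair_ne (W a)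
        refine ⟨{Sum.inr ⟨a, z1⟩, Sum.inr ⟨a, z2⟩}, ?_, ?_, ?_⟩
        · intro t ht
          simp only [Finset.coe_insert, Finset.coe_singleton, Set.mem_insert_iff,
            Set.mem_singleton_iff] at ht
          rcases ht with rfl | rfl <;> exact hmem1 a _ hav
        · rw [Finset.card_pair (inr_ne_of_snd_ne hz12)]
        · intro t ht
          simp only [Finset.mem_insert, Finset.mem_singleton] at ht
          rcases ht with rfl | rfl <;>
            · rw [corona_dist_inl_inr G H hG, SimpleGraph.dist_self,
                corona_dist_inr_inr_ne G H hG yb _ (Ne.symm hab)]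
              omega
  have swap : ∀ {u w : V ⊕ (Σ v, W v)},
      (∃ T : Finset (V ⊕ (Σ v, W v)), ↑T ⊆ S ∧
        2 ≤ T.card ∧ ∀ t ∈ T, (corona G H).dist u t ≠ (corona G H).dist w t) →
      (∃ T : Finset (V ⊕ (Σ v, W v)), ↑T ⊆ S ∧
        2 ≤ T.card ∧ ∀ t ∈ T, (corona G H).dist w t ≠ (corona G H).dist u t) := by
    rintro u w ⟨T, h1, h2, h3⟩
    exact ⟨T, h1, h2, fun t ht => (h3 t ht).symm⟩
  intro u w huw
  rcases u with a | ⟨a, xa⟩ <;> rcases w with b | ⟨b, yb⟩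
  · -- inl / inl
    have hab : a ≠ b := fun h => huw (by rw [h])
    obtain ⟨za, hza⟩ := pick a
    obtain ⟨zb, hzb⟩ := pick b
    refine ⟨{Sum.inr ⟨a, za⟩, Sum.inr ⟨b, zb⟩}, ?_, ?_, ?_⟩
    · intro t ht
      simp only [Finset.coe_insert, Finset.coe_singleton, Set.mem_insert_iff,
        Set.mem_singleton_iff] at ht
      rcases ht with rfl | rfl
      exacts [hza, hzb]
    · rw [Finset.card_pair (inr_ne_of_ne hab)]
    · intro t ht
      simp only [Finset.mem_insert, Finset.mem_singleton] at ht
      rcases ht with rfl | rfl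
      · rw [corona_dist_inl_inr G H hG, corona_dist_inl_inr G H hG,
          SimpleGraph.dist_self]
        have := hG.pos_dist_of_ne (Ne.symm hab)
        omega
      · rw [corona_dist_inl_inr G H hG, corona_dist_inl_inr G H hG,
          SimpleGraph.dist_self]
        have := hG.pos_dist_of_ne hab
        omega
  · exact hMixed a b yb
  · exact swap (hMixed b a xa)
  · by_cases hab : a = b
    · subst hab
      have hxy : xa ≠ yb := fun h => huw (by rw [h])
      by_cases hw : (Sum.inr ⟨a, yb⟩ : V ⊕ (Σ v, W v)) ∈ S
      · exact core a xa yb hxy hw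
      · have hu : (Sum.inr ⟨a, xa⟩ : V ⊕ (Σ v, W v)) ∈ S := by
          by_contra hu
          exact huw ((hforce a xa hu).trans (hforce a yb hw).symm)
        exact swap (core a yb xa (Ne.symm hxy) hu)
    · by_cases hw : (Sum.inr ⟨b, yb⟩ : V ⊕ (Σ v, W v)) ∈ S
      · exact coreNe a b xa yb hab hw
      · have hu : (Sum.inr ⟨a, xa⟩ : V ⊕ (Σ v, W v)) ∈ S := by
          by_contra hu
          exact huw ((hforce a xa hu).trans (hforce b yb hw).symm)
        exact swap (coreNe b a yb xa (Ne.symm hab) hu)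

lemma gen_contains (hG : G.Connected)
    (htwins : ∀ v, ∀ x : W v, ∃ y : W v, y ≠ x ∧
      ((H v).neighborSet x = (H v).neighborSet y ∨
        insert x ((H v).neighborSet x) = insert y ((H v).neighborSet y)))
    (S : Set (V ⊕ (Σ v, W v))) (hSgen : kMetricGen (corona G H) 2 S) :
    ∀ (b : V) (y : W b), (Sum.inr ⟨b, y⟩ : V ⊕ (Σ v, W v)) ∈ S := by
  classical
  intro b y
  obtain ⟨y', hy'ne, hy'twin⟩ := htwins b y
  have hne : (Sum.inr ⟨b, y⟩ : V ⊕ (Σ v, W v)) ≠ Sum.inr ⟨b, y'⟩ :=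
    inr_ne_of_snd_ne (Ne.symm hy'ne)
  obtain ⟨T, hTS, hTcard, hTdist⟩ := hSgen _ _ hne
  have hTsub : T ⊆ {Sum.inr ⟨b, y⟩, Sum.inr ⟨b, y'⟩} := by
    intro t ht
    by_contra hts
    simp only [Finset.mem_insert, Finset.mem_singleton] at hts
    push_neg at hts
    exact hTdist t ht
      (twin_indist G H hG (Ne.symm hy'ne) hy'twin t hts.1 hts.2)
  have hTeq : T = {Sum.inr ⟨b, y⟩, Sum.inr ⟨b, y'⟩} :=
    Finset.eq_of_subset_of_card_le hTsub (by rw [Finset.card_pair hne]; exact hTcard)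
  have : (Sum.inr ⟨b, y⟩ : V ⊕ (Σ v, W v)) ∈ T := by
    rw [hTeq]
    exact Finset.mem_insert_self _ _
  exact hTS (Finset.mem_coe.2 this)

end GenLemmas

/-- every vertex of every copy `H v` is a twin iff
`dim₂(G ⊙ 𝓗) = Σ |V(H_v)|`. -/
theorem stmt_16 {V : Type*} [Fintype V] (hn : 2 ≤ Fintype.card V) {W : V → Type*}
    [∀ v, Fintype (W v)] [∀ v, Nontrivial (W v)] (G : SimpleGraph V) (hG : G.Connected)
    (H : ∀ v, SimpleGraph (W v)) (hH : ∀ v, (H v).Connected) :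
    (∀ v, ∀ x : W v, ∃ y : W v, y ≠ x ∧
        ((H v).neighborSet x = (H v).neighborSet y ∨
          insert x ((H v).neighborSet x) = insert y ((H v).neighborSet y))) ↔
      kMetricDim (corona G H) 2 = ∑ v, Fintype.card (W v) := by
  classical
  have hVnt : Nontrivial V := Fintype.one_lt_card_iff_nontrivial.1 (by omega)
  set AF : Finset (V ⊕ (Σ v, W v)) := Finset.univ.image Sum.inr with hAF
  have hAFcard : AF.card = ∑ v, Fintype.card (W v) := by
    rw [hAF, Finset.card_image_of_injective _ Sum.inr_injective, Finset.card_univ,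
      Fintype.card_sigma]
  have hAFcoe : (↑AF : Set (V ⊕ (Σ v, W v))) = Set.range Sum.inr := by
    rw [hAF]
    simp
  have hAmem : (∑ v, Fintype.card (W v)) ∈
      {m | ∃ S : Finset (V ⊕ (Σ v, W v)), kMetricGen (corona G H) 2 ↑S ∧ S.card = m} :=
    ⟨AF, by rw [hAFcoe]; exact genA G H hG hVnt, hAFcard⟩
  constructor
  · intro htwins
    apply le_antisymm
    · exact Nat.sInf_le hAmem
    · apply le_csInf ⟨_, hAmem⟩
      rintro m ⟨S, hSgen, rfl⟩
      have hsub : AF ⊆ S := by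
        intro t ht
        rw [hAF] at ht
        obtain ⟨p, -, rfl⟩ := Finset.mem_image.1 ht
        exact Finset.mem_coe.1 (gen_contains G H hG htwins ↑S hSgen p.1 p.2)
      calc ∑ v, Fintype.card (W v) = AF.card := hAFcard.symm
        _ ≤ S.card := Finset.card_le_card hsub
  · intro hdim
    by_contra hnot
    push_neg at hnot
    obtain ⟨v, x, hx⟩ := hnot
    have hx' : ∀ y : W v, y ≠ x → (H v).neighborSet x ≠ (H v).neighborSet y ∧
        insert x ((H v).neighborSet x) ≠ insert y ((H v).neighborSet y) := by
      intro y hy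
      have := hx y hy
      exact this
    have hgen := genErase G H hG hVnt v x hx'
    have hxAF : (Sum.inr ⟨v, x⟩ : V ⊕ (Σ v, W v)) ∈ AF := by
      rw [hAF]
      exact Finset.mem_image_of_mem _ (Finset.mem_univ _)
    have hmem : (∑ v, Fintype.card (W v)) - 1 ∈
        {m | ∃ S : Finset (V ⊕ (Σ v, W v)), kMetricGen (corona G H) 2 ↑S ∧ S.card = m} := by
      refine ⟨AF.erase (Sum.inr ⟨v, x⟩), ?_, ?_⟩
      · rw [Finset.coe_erase, hAFcoe]
        exact hgen
      · rw [Finset.card_erase_of_mem hxAF, hAFcard]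
    have hle := Nat.sInf_le hmem
    rw [kMetricDim] at hdim
    rw [hdim] at hle
    have hpos : 0 < ∑ v', Fintype.card (W v') :=
      Finset.sum_pos (fun i _ => Fintype.card_pos) ⟨v, Finset.mem_univ v⟩
    omega
end

section
/- Let G be connected of order n ≥ 2 and H a family of n non-trivial graphs where each H_i is k_i-metric dimensional and has diameter at most 2. Then for every k ≤ min_i k_i, dim_k(G⊙H) = Σ_{i=1}^n dim_k(H_i). -/
open SimpleGraph

section CoronaHelpers

variable {V : Type*} {W : V → Type*} {G : SimpleGraph V} {H : ∀ v, SimpleGraph (W v)}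

lemma corona_adj_ll {a b : V} : (corona G H).Adj (.inl a) (.inl b) ↔ G.Adj a b := by
  rw [corona, fromRel_adj]
  constructor
  · rintro ⟨-, h | h⟩
    · exact h
    · exact h.symm
  · intro h
    exact ⟨by simpa using h.ne, Or.inl h⟩

lemma corona_adj_hub {v : V} {x : W v} : (corona G H).Adj (.inl v) (.inr ⟨v, x⟩) := by
  rw [corona, fromRel_adj]
  exact ⟨by simp, Or.inl rfl⟩

lemma corona_adj_rr {v : V} {x y : W v} (h : (H v).Adj x y) :
    (corona G H).Adj (.inr ⟨v, x⟩) (.inr ⟨v, y⟩) := by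
  rw [corona, fromRel_adj]
  refine ⟨by simpa using h.ne, Or.inl ⟨rfl, h⟩⟩

open Classical in
noncomputable def cD (G : SimpleGraph V) (H : ∀ v, SimpleGraph (W v)) :
    (V ⊕ (Σ v, W v)) → (V ⊕ (Σ v, W v)) → ℕ
  | .inl a, .inl b => G.dist a b
  | .inl a, .inr b => G.dist a b.1 + 1
  | .inr a, .inl b => G.dist a.1 b + 1
  | .inr a, .inr b => if h : a.1 = b.1 then (H b.1).dist (h ▸ a.2) b.2 else G.dist a.1 b.1 + 2

lemma cD_self (a : V ⊕ (Σ v, W v)) : cD G H a a = 0 := by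
  rcases a with a | ⟨v, x⟩ <;> simp [cD]

lemma cD_rr_same {v : V} (x y : W v) : cD G H (.inr ⟨v, x⟩) (.inr ⟨v, y⟩) = (H v).dist x y := by
  simp [cD]

lemma cD_rr_ne {v u : V} (h : v ≠ u) (x : W v) (y : W u) :
    cD G H (.inr ⟨v, x⟩) (.inr ⟨u, y⟩) = G.dist v u + 2 := by
  simp [cD, h]

lemma cD_ll (a b : V) : cD G H (.inl a) (.inl b) = G.dist a b := rfl

lemma cD_lr (a : V) (b : Σ v, W v) : cD G H (.inl a) (.inr b) = G.dist a b.1 + 1 := rfl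

lemma cD_rl (a : Σ v, W v) (b : V) : cD G H (.inr a) (.inl b) = G.dist a.1 b + 1 := rfl

lemma cD_adj (hG : G.Connected) (hH : ∀ v, (H v).Connected)
    (hdiam : ∀ v, ∀ x y : W v, (H v).dist x y ≤ 2)
    {a c : V ⊕ (Σ v, W v)} (hac : (corona G H).Adj a c) (b : V ⊕ (Σ v, W v)) :
    cD G H a b ≤ 1 + cD G H c b := by
  rw [corona, fromRel_adj] at hac
  obtain ⟨hne, hrel⟩ := hac
  rcases a with a | ⟨v, x⟩ <;> rcases c with c | ⟨u, z⟩
  · -- inl a, inl c : G.Adj a c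
    have hadj : G.Adj a c := by
      rcases hrel with h | h
      · exact h
      · exact h.symm
    have h1 : G.dist a c = 1 := dist_eq_one_iff_adj.mpr hadj
    rcases b with w | ⟨w, y⟩
    · rw [cD_ll, cD_ll]
      have := hG.dist_triangle (v := c) (u := a) (w := w)
      omega
    · rw [cD_lr, cD_lr]
      dsimp only
      have := hG.dist_triangle (v := c) (u := a) (w := w)
      omega
  · -- inl a, inr ⟨u, z⟩ : a = u
    have hau : a = u := by
      rcases hrel with h | h
      · exact h
      · exact h.elim
    rcases b with w | ⟨w, y⟩
    · rw [cD_ll, cD_rl, hau]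
      dsimp only
      omega
    · rw [cD_lr, hau]
      dsimp only
      by_cases hw : u = w
      · subst hw
        rw [cD_rr_same, SimpleGraph.dist_self]
        omega
      · rw [cD_rr_ne hw]
        omega
  · -- inr ⟨v, x⟩, inl c : c = v
    have hcv : c = v := by
      rcases hrel with h | h
      · exact h.elim
      · exact h
    rcases b with w | ⟨w, y⟩
    · rw [cD_rl, cD_ll, hcv]
      dsimp only
      omega
    · rw [cD_lr, hcv]
      dsimp only
      by_cases hw : v = w
      · subst hw
        rw [cD_rr_same, SimpleGraph.dist_self]
        have := hdiam v x y
        omega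
      · rw [cD_rr_ne hw]
        omega
  · -- inr ⟨v, x⟩, inr ⟨u, z⟩
    have hvu : v = u := by
      rcases hrel with h | h
      · exact h.1
      · exact h.1.symm
    subst hvu
    have hadj : (H v).Adj x z := by
      rcases hrel with h | h
      · have h2 := h.2
        simpa using h2
      · have h2 := h.2
        exact (by simpa using h2 : (H v).Adj z x).symm
    have h1 : (H v).dist x z = 1 := dist_eq_one_iff_adj.mpr hadj
    rcases b with w | ⟨w, y⟩
    · rw [cD_rl, cD_rl]
      dsimp only
      omega
    · by_cases hw : v = w
      · subst hw
        rw [cD_rr_same, cD_rr_same]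
        have := (hH v).dist_triangle (u := x) (v := z) (w := y)
        omega
      · rw [cD_rr_ne hw, cD_rr_ne hw]
        omega

lemma cD_le_length (hG : G.Connected) (hH : ∀ v, (H v).Connected)
    (hdiam : ∀ v, ∀ x y : W v, (H v).dist x y ≤ 2)
    {a b : V ⊕ (Σ v, W v)} (p : (corona G H).Walk a b) :
    cD G H a b ≤ p.length := by
  induction p with
  | nil => simp [cD_self]
  | cons h q ih =>
    simp only [SimpleGraph.Walk.length_cons]
    refine le_trans (cD_adj hG hH hdiam h _) ?_
    omega

def inlHom (G : SimpleGraph V) (H : ∀ v, SimpleGraph (W v)) : G →g corona G H :=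
  ⟨Sum.inl, corona_adj_ll.mpr⟩

def copyHom (G : SimpleGraph V) (H : ∀ v, SimpleGraph (W v)) (v : V) : H v →g corona G H :=
  ⟨fun z => .inr ⟨v, z⟩, corona_adj_rr⟩

lemma corona_dist_eq (hG : G.Connected) (hH : ∀ v, (H v).Connected)
    (hdiam : ∀ v, ∀ x y : W v, (H v).dist x y ≤ 2)
    {a b : V ⊕ (Σ v, W v)} (p : (corona G H).Walk a b) (hp : p.length = cD G H a b) :
    (corona G H).dist a b = cD G H a b := by
  refine le_antisymm (hp ▸ SimpleGraph.dist_le p) ?_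
  obtain ⟨r, hr⟩ := Reachable.exists_walk_length_eq_dist ⟨p⟩
  exact hr ▸ cD_le_length hG hH hdiam r

lemma corona_dist_ll (hG : G.Connected) (hH : ∀ v, (H v).Connected)
    (hdiam : ∀ v, ∀ x y : W v, (H v).dist x y ≤ 2) (a b : V) :
    (corona G H).dist (.inl a) (.inl b) = G.dist a b := by
  obtain ⟨p, hp⟩ := hG.exists_walk_length_eq_dist a b
  exact corona_dist_eq hG hH hdiam (p.map (inlHom G H)) (by rw [cD_ll]; exact (SimpleGraph.Walk.length_map _ p).trans hp)

lemma corona_dist_lr (hG : G.Connected) (hH : ∀ v, (H v).Connected)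
    (hdiam : ∀ v, ∀ x y : W v, (H v).dist x y ≤ 2) (a u : V) (y : W u) :
    (corona G H).dist (.inl a) (.inr ⟨u, y⟩) = G.dist a u + 1 := by
  obtain ⟨p, hp⟩ := hG.exists_walk_length_eq_dist a u
  exact corona_dist_eq hG hH hdiam ((p.map (inlHom G H)).concat corona_adj_hub)
    ((SimpleGraph.Walk.length_concat _ _).trans (congrArg (· + 1) ((SimpleGraph.Walk.length_map _ p).trans hp)))

lemma corona_dist_rl (hG : G.Connected) (hH : ∀ v, (H v).Connected)
    (hdiam : ∀ v, ∀ x y : W v, (H v).dist x y ≤ 2) (a u : V) (y : W u) :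
    (corona G H).dist (.inr ⟨u, y⟩) (.inl a) = G.dist u a + 1 := by
  rw [SimpleGraph.dist_comm, corona_dist_lr hG hH hdiam, SimpleGraph.dist_comm]

lemma corona_dist_rr_same (hG : G.Connected) (hH : ∀ v, (H v).Connected)
    (hdiam : ∀ v, ∀ x y : W v, (H v).dist x y ≤ 2) (v : V) (x y : W v) :
    (corona G H).dist (.inr ⟨v, x⟩) (.inr ⟨v, y⟩) = (H v).dist x y := by
  obtain ⟨p, hp⟩ := (hH v).exists_walk_length_eq_dist x y
  have h1 : (p.map (copyHom G H v)).length = cD G H (.inr ⟨v, x⟩) (.inr ⟨v, y⟩) := by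
    rw [cD_rr_same]
    simpa using hp
  have h2 : (corona G H).dist (.inr ⟨v, x⟩) (.inr ⟨v, y⟩)
      = cD G H (.inr ⟨v, x⟩) (.inr ⟨v, y⟩) := corona_dist_eq hG hH hdiam _ h1
  rwa [cD_rr_same] at h2

lemma corona_dist_rr_ne (hG : G.Connected) (hH : ∀ v, (H v).Connected)
    (hdiam : ∀ v, ∀ x y : W v, (H v).dist x y ≤ 2) {v u : V} (hvu : v ≠ u) (x : W v) (y : W u) :
    (corona G H).dist (.inr ⟨v, x⟩) (.inr ⟨u, y⟩) = G.dist v u + 2 := by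
  obtain ⟨p, hp⟩ := hG.exists_walk_length_eq_dist v u
  have h1 : (SimpleGraph.Walk.cons ((corona_adj_hub (v := v) (x := x)).symm)
      ((p.map (inlHom G H)).concat (corona_adj_hub (v := u) (x := y)))).length
      = cD G H (.inr ⟨v, x⟩) (.inr ⟨u, y⟩) := by
    rw [cD_rr_ne hvu]
    exact (congrArg (· + 1) ((SimpleGraph.Walk.length_concat (p.map (inlHom G H)) (corona_adj_hub (v := u) (x := y))).trans (congrArg (· + 1) ((SimpleGraph.Walk.length_map _ p).trans hp))))
  have h2 : (corona G H).dist (.inr ⟨v, x⟩) (.inr ⟨u, y⟩)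
      = cD G H (.inr ⟨v, x⟩) (.inr ⟨u, y⟩) := corona_dist_eq hG hH hdiam _ h1
  rwa [cD_rr_ne hvu] at h2

lemma kMetricGen_mono {U : Type*} [Fintype U] {G : SimpleGraph U} {k k' : ℕ} (h : k ≤ k')
    {S : Set U} (hS : kMetricGen G k' S) : kMetricGen G k S := by
  intro u v huv
  obtain ⟨T, h1, h2, h3⟩ := hS u v huv
  exact ⟨T, h1, le_trans h h2, h3⟩

lemma kMetricGen_univ {U : Type*} [Fintype U] {G : SimpleGraph U} {k : ℕ}
    (h : ∃ S : Set U, kMetricGen G k S) :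
    kMetricGen G k ↑(Finset.univ : Finset U) := by
  obtain ⟨S, hS⟩ := h
  intro u v huv
  obtain ⟨T, _, h2, h3⟩ := hS u v huv
  exact ⟨T, by simp, h2, h3⟩

lemma k_le_card_of_gen' {U : Type*} [Fintype U] [Nontrivial U] {G : SimpleGraph U} {k : ℕ}
    {S : Finset U} (h : kMetricGen G k ↑S) : k ≤ S.card := by
  obtain ⟨x, y, hxy⟩ := exists_pair_ne U
  obtain ⟨T, h1, h2, -⟩ := h x y hxy
  exact le_trans h2 (Finset.card_le_card (Finset.coe_subset.mp h1))


end CoronaHelpers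

/-- if each `H v` is `kk v`-metric dimensional of diameter at most 2, then
for every `k` with `1 ≤ k ≤ min_v kk v`, `dim_k(G ⊙ 𝓗) = Σ dim_k(H_v)`. -/
theorem stmt_17 {V : Type*} [Fintype V] (hn : 2 ≤ Fintype.card V) {W : V → Type*}
    [∀ v, Fintype (W v)] [∀ v, Nontrivial (W v)] (G : SimpleGraph V) (hG : G.Connected)
    (H : ∀ v, SimpleGraph (W v)) (hH : ∀ v, (H v).Connected)
    (kk : V → ℕ) (hdim : ∀ v, kMetricDimensional (H v) (kk v))
    (hdiam : ∀ v, ∀ x y : W v, (H v).dist x y ≤ 2)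
    (k : ℕ) (hk1 : 1 ≤ k) (hk : ∀ v, k ≤ kk v) :
    kMetricDim (corona G H) k = ∑ v, kMetricDim (H v) k := by
  classical
  have dll := corona_dist_ll (G := G) (H := H) hG hH hdiam
  have dlr := corona_dist_lr (G := G) (H := H) hG hH hdiam
  have drl := corona_dist_rl (G := G) (H := H) hG hH hdiam
  have drs := corona_dist_rr_same (G := G) (H := H) hG hH hdiam
  have drn := fun {v u : V} (hvu : v ≠ u) (x : W v) (y : W u) =>
    corona_dist_rr_ne (G := G) (H := H) hG hH hdiam hvu x y
  have inj : ∀ v : V, Function.Injective (fun z : W v => (Sum.inr ⟨v, z⟩ : V ⊕ Σ v, W v)) := by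
    intro v a b h
    simpa using h
  -- choose minimum generators for each H v
  have hne : ∀ v, {m | ∃ S : Finset (W v), kMetricGen (H v) k ↑S ∧ S.card = m}.Nonempty := by
    intro v
    exact ⟨_, Finset.univ, kMetricGen_univ ⟨_, kMetricGen_mono (hk v) ((hdim v).1).choose_spec⟩, rfl⟩
  choose B hBgen hBcard using fun v => Nat.sInf_mem (hne v)
  have hBk : ∀ v, k ≤ (B v).card := fun v => k_le_card_of_gen' (hBgen v)
  -- the union of the generators, inside the corona
  set Bc : Finset (V ⊕ Σ v, W v) :=
    (Finset.univ.sigma fun v => B v).image Sum.inr with hBcdef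
  have mem_Bc : ∀ {v : V} {z : W v}, (Sum.inr ⟨v, z⟩ : V ⊕ Σ v, W v) ∈ Bc ↔ z ∈ B v := by
    intro v z
    simp [hBcdef, Finset.mem_sigma]
  have hBc_card : Bc.card = ∑ v, (B v).card := by
    rw [hBcdef, Finset.card_image_of_injective _ Sum.inr_injective, Finset.card_sigma]
  -- upper bound: Bc is a k-metric generator of the corona
  have hgen : kMetricGen (corona G H) k ↑Bc := by
    intro a b hab
    have copyT : ∀ v : V, ((((B v).image fun z => (Sum.inr ⟨v, z⟩ : V ⊕ Σ v, W v)) : Finset (V ⊕ Σ v, W v)) : Set (V ⊕ Σ v, W v)) ⊆ ↑Bc := by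
      intro v w hw
      simp only [Finset.coe_image, Set.mem_image, Finset.mem_coe] at hw
      obtain ⟨z, hz, rfl⟩ := hw
      exact mem_Bc.mpr hz
    have copyC : ∀ v : V, k ≤ ((B v).image fun z => (Sum.inr ⟨v, z⟩ : V ⊕ Σ v, W v)).card := by
      intro v
      rw [Finset.card_image_of_injective _ (inj v)]
      exact hBk v
    rcases a with a | ⟨v, x⟩ <;> rcases b with b | ⟨u, y⟩
    · -- two hubs
      have hab' : a ≠ b := by simpa using hab
      refine ⟨(B a).image fun z => Sum.inr ⟨a, z⟩, copyT a, copyC a, ?_⟩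
      intro w hw
      obtain ⟨z, hz, rfl⟩ := Finset.mem_image.mp hw
      rw [dlr, dlr, SimpleGraph.dist_self]
      have := hG.pos_dist_of_ne (hab'.symm)
      omega
    · -- hub vs copy vertex
      by_cases hau : a = u
      · subst hau
        obtain ⟨b, hb⟩ := Fintype.exists_ne_of_one_lt_card (by omega) a
        refine ⟨(B b).image fun z => Sum.inr ⟨b, z⟩, copyT b, copyC b, ?_⟩
        intro w hw
        obtain ⟨z, hz, rfl⟩ := Finset.mem_image.mp hw
        rw [dlr, drn (fun h => hb (h.symm)) y z]
        omega
      · refine ⟨(B a).image fun z => Sum.inr ⟨a, z⟩, copyT a, copyC a, ?_⟩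
        intro w hw
        obtain ⟨z, hz, rfl⟩ := Finset.mem_image.mp hw
        rw [dlr, drn (fun h => hau h.symm) y z, SimpleGraph.dist_self]
        omega
    · -- copy vertex vs hub
      by_cases hbv : b = v
      · subst hbv
        obtain ⟨a, ha⟩ := Fintype.exists_ne_of_one_lt_card (by omega) b
        refine ⟨(B a).image fun z => Sum.inr ⟨a, z⟩, copyT a, copyC a, ?_⟩
        intro w hw
        obtain ⟨z, hz, rfl⟩ := Finset.mem_image.mp hw
        rw [drn (fun h => ha h.symm) x z, dlr]
        omega
      · refine ⟨(B b).image fun z => Sum.inr ⟨b, z⟩, copyT b, copyC b, ?_⟩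
        intro w hw
        obtain ⟨z, hz, rfl⟩ := Finset.mem_image.mp hw
        rw [drn (fun h => hbv h.symm) x z, dlr, SimpleGraph.dist_self]
        omega
    · -- two copy vertices
      by_cases hvu : v = u
      · subst hvu
        have hxy : x ≠ y := by simpa using hab
        obtain ⟨T0, hT0B, hT0c, hT0d⟩ := hBgen v x y hxy
        refine ⟨T0.image fun z => Sum.inr ⟨v, z⟩, ?_, ?_, ?_⟩
        · intro w hw
          simp only [Finset.coe_image, Set.mem_image, Finset.mem_coe] at hw
          obtain ⟨z, hz, rfl⟩ := hw
          exact mem_Bc.mpr (hT0B hz)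
        · rw [Finset.card_image_of_injective _ (inj v)]
          exact hT0c
        · intro w hw
          obtain ⟨z, hz, rfl⟩ := Finset.mem_image.mp hw
          rw [drs, drs]
          exact hT0d z hz
      · refine ⟨(B v).image fun z => Sum.inr ⟨v, z⟩, copyT v, copyC v, ?_⟩
        intro w hw
        obtain ⟨z, hz, rfl⟩ := Finset.mem_image.mp hw
        rw [drs, drn (fun h => hvu h.symm) y z]
        have := hdiam v x z
        have := hG.pos_dist_of_ne (fun h : u = v => hvu h.symm)
        omega
  -- lower bound : any corona generator has at least ∑ dim elements
  have hlow : ∀ S : Finset (V ⊕ Σ v, W v), kMetricGen (corona G H) k ↑S →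
      ∑ v, kMetricDim (H v) k ≤ S.card := by
    intro S hS
    set Sv : ∀ v : V, Finset (W v) :=
      fun v => Finset.univ.filter fun z => (Sum.inr ⟨v, z⟩ : V ⊕ Σ v, W v) ∈ S with hSvdef
    have hSv_gen : ∀ v, kMetricGen (H v) k ↑(Sv v) := by
      intro v x y hxy
      obtain ⟨T, hTS, hTc, hTd⟩ := hS (Sum.inr ⟨v, x⟩) (Sum.inr ⟨v, y⟩) (by simp [hxy])
      have hform : ∀ w ∈ T, ∃ z : W v, w = Sum.inr ⟨v, z⟩ := by
        intro w hw
        have hd := hTd w hw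
        rcases w with w | ⟨u, z⟩
        · exact absurd (by rw [drl, drl]) hd
        · by_cases hu : v = u
          · subst hu; exact ⟨z, rfl⟩
          · exact absurd (by rw [drn hu x z, drn hu y z]) hd
      set T' : Finset (W v) := Finset.univ.filter fun z => (Sum.inr ⟨v, z⟩ : V ⊕ Σ v, W v) ∈ T
        with hT'def
      refine ⟨T', ?_, ?_, ?_⟩
      · intro z hz
        simp only [hT'def, Finset.coe_filter, Set.mem_setOf_eq, Finset.mem_univ, true_and] at hz
        have : (Sum.inr ⟨v, z⟩ : V ⊕ Σ v, W v) ∈ S := hTS hz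
        simp [hSvdef, this]
      · have hsub : T ⊆ T'.image fun z => Sum.inr ⟨v, z⟩ := by
          intro w hw
          obtain ⟨z, rfl⟩ := hform w hw
          exact Finset.mem_image.mpr ⟨z, by simp [hT'def, hw], rfl⟩
        have h2 := Finset.card_le_card hsub
        rw [Finset.card_image_of_injective _ (inj v)] at h2
        omega
      · intro z hz
        have hzT : (Sum.inr ⟨v, z⟩ : V ⊕ Σ v, W v) ∈ T := by
          simpa [hT'def] using hz
        have := hTd _ hzT
        rwa [drs, drs] at this
    have hSv_le : ∀ v, kMetricDim (H v) k ≤ (Sv v).card :=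
      fun v => Nat.sInf_le ⟨Sv v, hSv_gen v, rfl⟩
    have hsum : ∑ v, (Sv v).card ≤ S.card := by
      have h1 : (Finset.univ.sigma Sv).image Sum.inr ⊆ S := by
        intro w hw
        obtain ⟨p, hp, rfl⟩ := Finset.mem_image.mp hw
        obtain ⟨u, z⟩ := p
        have := (Finset.mem_sigma.mp hp).2
        simpa [hSvdef] using this
      have h2 := Finset.card_le_card h1
      rwa [Finset.card_image_of_injective _ Sum.inr_injective, Finset.card_sigma] at h2
    calc ∑ v, kMetricDim (H v) k ≤ ∑ v, (Sv v).card := Finset.sum_le_sum fun v _ => hSv_le v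
      _ ≤ S.card := hsum
  -- conclude
  have hub : kMetricDim (corona G H) k ≤ ∑ v, kMetricDim (H v) k := by
    have hBsum : Bc.card = ∑ v, kMetricDim (H v) k := by
      rw [hBc_card]
      exact Finset.sum_congr rfl fun v _ => hBcard v
    exact hBsum ▸ Nat.sInf_le ⟨Bc, hgen, rfl⟩
  obtain ⟨S0, hS0, hc0⟩ :=
    Nat.sInf_mem (⟨Bc.card, Bc, hgen, rfl⟩ :
      {m | ∃ S : Finset (V ⊕ Σ v, W v), kMetricGen (corona G H) k ↑S ∧ S.card = m}.Nonempty)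
  exact le_antisymm hub (le_trans (hlow S0 hS0) (le_of_eq hc0))
end

section
/- For any integer n ≥ 6, the 2-metric dimension of the fan graph F_{1,n} = K_1 + P_n equals ⌈(n+1)/2⌉, and the 3-metric dimension equals n − ⌊(n−4)/5⌋. -/
open SimpleGraph

namespace Stmt18
open Finset

variable {n : ℕ}

/-- The fan graph. -/
abbrev FG (n : ℕ) : SimpleGraph (Option (Fin n)) := K1join (SimpleGraph.pathGraph n)

/-- embedding of naturals as path vertices -/
def ι (n : ℕ) (i : ℕ) : Option (Fin n) := if h : i < n then some ⟨i, h⟩ else none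

lemma ι_ne_none {i : ℕ} (hi : i < n) : ι n i ≠ none := by simp [ι, hi]

lemma ι_inj {i j : ℕ} (hi : i < n) (hj : j < n) (h : ι n i = ι n j) : i = j := by
  simp only [ι, dif_pos hi, dif_pos hj, Option.some.injEq, Fin.mk.injEq] at h
  exact h

lemma vertex_cases (w : Option (Fin n)) : w = none ∨ ∃ l, l < n ∧ w = ι n l := by
  cases w with
  | none => exact Or.inl rfl
  | some x => exact Or.inr ⟨x.val, x.isLt, by simp [ι, x.isLt]⟩

lemma adj_none_ι {i : ℕ} (hi : i < n) : (FG n).Adj none (ι n i) := by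
  simp only [ι, dif_pos hi, FG, K1join, SimpleGraph.fromRel_adj]
  exact ⟨by simp, Or.inl trivial⟩

lemma adj_ι_ι {i j : ℕ} (hi : i < n) (hj : j < n) :
    (FG n).Adj (ι n i) (ι n j) ↔ (i + 1 = j ∨ j + 1 = i) := by
  simp only [ι, dif_pos hi, dif_pos hj, FG, K1join, SimpleGraph.fromRel_adj]
  constructor
  · rintro ⟨-, h | h⟩ <;> simp only [pathGraph_adj] at h <;>
      [simpa using h; exact Or.symm (by simpa using h)]
  · intro h
    refine ⟨by simp; omega, Or.inl ?_⟩
    simp only [pathGraph_adj]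
    simpa using h


lemma dist_cases (u v : Option (Fin n)) (hne : u ≠ v) :
    ((FG n).Adj u v ∧ (FG n).dist u v = 1) ∨ (¬ (FG n).Adj u v ∧ (FG n).dist u v = 2) := by
  by_cases h : (FG n).Adj u v
  · exact Or.inl ⟨h, SimpleGraph.dist_eq_one_iff_adj.mpr h⟩
  · refine Or.inr ⟨h, ?_⟩
    rcases vertex_cases u with rfl | ⟨i, hi, rfl⟩
    · rcases vertex_cases v with rfl | ⟨j, hj, rfl⟩
      · exact absurd rfl hne
      · exact absurd (adj_none_ι hj) h
    · rcases vertex_cases v with rfl | ⟨j, hj, rfl⟩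
      · exact absurd ((FG n).adj_symm (adj_none_ι hi)) h
      · let w : (FG n).Walk (ι n i) (ι n j) :=
          SimpleGraph.Walk.cons ((FG n).adj_symm (adj_none_ι hi))
            (SimpleGraph.Walk.cons (adj_none_ι hj) SimpleGraph.Walk.nil)
        have hle : (FG n).dist (ι n i) (ι n j) ≤ 2 := by
          have hl : w.length = 2 := rfl
          exact hl ▸ SimpleGraph.dist_le w
        have h0 : (FG n).dist (ι n i) (ι n j) ≠ 0 := by
          intro h0
          rcases SimpleGraph.dist_eq_zero_iff_eq_or_not_reachable.mp h0 with h1 | h1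
          · exact hne h1
          · exact h1 ⟨w⟩
        have h1 : (FG n).dist (ι n i) (ι n j) ≠ 1 := fun h1 =>
          h (SimpleGraph.dist_eq_one_iff_adj.mp h1)
        omega

lemma dist_ne_iff {u v : Option (Fin n)} (huv : u ≠ v) (w : Option (Fin n)) :
    ((FG n).dist u w ≠ (FG n).dist v w) ↔
      (w = u ∨ w = v ∨ ¬ ((FG n).Adj u w ↔ (FG n).Adj v w)) := by
  by_cases hwu : w = u
  · subst hwu
    refine iff_of_true ?_ (Or.inl rfl)
    have h0 : (FG n).dist w w = 0 := SimpleGraph.dist_self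
    rw [h0]
    rcases dist_cases v w (Ne.symm huv) with ⟨-, h⟩ | ⟨-, h⟩ <;> omega
  · by_cases hwv : w = v
    · subst hwv
      refine iff_of_true ?_ (Or.inr (Or.inl rfl))
      have h0 : (FG n).dist w w = 0 := SimpleGraph.dist_self
      rw [h0]
      rcases dist_cases u w huv with ⟨-, h⟩ | ⟨-, h⟩ <;> omega
    · have h2 := dist_cases u w (fun h => hwu h.symm)
      have h3 := dist_cases v w (fun h => hwv h.symm)
      simp only [hwu, hwv, false_or]
      rcases h2 with ⟨ha, hd⟩ | ⟨ha, hd⟩ <;> rcases h3 with ⟨hb, hd'⟩ | ⟨hb, hd'⟩ <;>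
        rw [hd, hd'] <;> simp [ha, hb]


open scoped Classical in
noncomputable def Dfin (n : ℕ) (u v : Option (Fin n)) : Finset (Option (Fin n)) :=
  Finset.univ.filter (fun w => w = u ∨ w = v ∨ ¬ ((FG n).Adj u w ↔ (FG n).Adj v w))

lemma mem_Dfin {u v w : Option (Fin n)} :
    w ∈ Dfin n u v ↔ (w = u ∨ w = v ∨ ¬ ((FG n).Adj u w ↔ (FG n).Adj v w)) := by
  simp [Dfin]

lemma Dfin_comm (u v : Option (Fin n)) : Dfin n u v = Dfin n v u := by
  ext w; simp only [mem_Dfin]; tauto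

lemma gen_iff {k : ℕ} {S : Finset (Option (Fin n))} :
    kMetricGen (FG n) k ↑S ↔ ∀ u v : Option (Fin n), u ≠ v → k ≤ (S ∩ Dfin n u v).card := by
  classical
  constructor
  · intro h u v huv
    obtain ⟨T, hTS, hk, hT⟩ := h u v huv
    refine hk.trans (Finset.card_le_card fun w hw => ?_)
    rw [Finset.mem_inter]
    refine ⟨?_, mem_Dfin.mpr ((dist_ne_iff huv w).mp (hT w hw))⟩
    have : w ∈ (↑S : Set (Option (Fin n))) := hTS (by exact_mod_cast hw)
    exact_mod_cast this
  · intro h u v huv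
    refine ⟨S ∩ Dfin n u v, ?_, h u v huv, ?_⟩
    · intro w hw
      have : w ∈ S ∩ Dfin n u v := by exact_mod_cast hw
      exact_mod_cast (Finset.mem_inter.mp this).1
    · intro w hw
      exact (dist_ne_iff huv w).mpr (mem_Dfin.mp (Finset.mem_inter.mp hw).2)

/-- indicator of path membership -/
def fS (n : ℕ) (S : Finset (Option (Fin n))) (i : ℕ) : ℕ :=
  if i < n ∧ ι n i ∈ S then 1 else 0

lemma fS_le_one {S : Finset (Option (Fin n))} {i : ℕ} : fS n S i ≤ 1 := by
  unfold fS; split <;> omega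

lemma constraint {k : ℕ} {S : Finset (Option (Fin n))}
    (hgen : ∀ u v : Option (Fin n), u ≠ v → k ≤ (S ∩ Dfin n u v).card)
    {i j : ℕ} (hi : i < n) (hj : j < n) (hne : i ≠ j) (E : Finset ℕ)
    (hE : ∀ l, l < n →
      (l = i ∨ l = j ∨ ¬ ((i + 1 = l ∨ l + 1 = i) ↔ (j + 1 = l ∨ l + 1 = j))) → l ∈ E) :
    k ≤ ∑ e ∈ E, fS n S e := by
  classical
  have hne' : ι n i ≠ ι n j := fun h => hne (ι_inj hi hj h)
  refine (hgen _ _ hne').trans ?_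
  have hsub : S ∩ Dfin n (ι n i) (ι n j) ⊆
      (E.filter (fun e => e < n ∧ ι n e ∈ S)).image (ι n) := by
    intro w hw
    rw [Finset.mem_inter] at hw
    obtain ⟨hwS, hwD⟩ := hw
    rw [mem_Dfin] at hwD
    rcases vertex_cases w with rfl | ⟨l, hl, rfl⟩
    · exfalso
      rcases hwD with h | h | h
      · exact ι_ne_none hi h.symm
      · exact ι_ne_none hj h.symm
      · exact h ⟨fun _ => (FG n).adj_symm (adj_none_ι hj), fun _ => (FG n).adj_symm (adj_none_ι hi)⟩
    · refine Finset.mem_image.mpr ⟨l, Finset.mem_filter.mpr ⟨?_, hl, hwS⟩, rfl⟩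
      refine hE l hl ?_
      rcases hwD with h | h | h
      · exact Or.inl (ι_inj hl hi h)
      · exact Or.inr (Or.inl (ι_inj hl hj h))
      · refine Or.inr (Or.inr ?_)
        rw [adj_ι_ι hi hl, adj_ι_ι hj hl] at h
        exact h
  calc (S ∩ Dfin n (ι n i) (ι n j)).card
      ≤ ((E.filter (fun e => e < n ∧ ι n e ∈ S)).image (ι n)).card := Finset.card_le_card hsub
    _ ≤ (E.filter (fun e => e < n ∧ ι n e ∈ S)).card := Finset.card_image_le
    _ = ∑ e ∈ E, fS n S e := by
        rw [Finset.card_filter]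
        exact Finset.sum_congr rfl fun e _ => rfl

lemma sum_insert_le' (f : ℕ → ℕ) (a : ℕ) (s : Finset ℕ) :
    (insert a s).sum f ≤ f a + s.sum f := by
  by_cases h : a ∈ s
  · rw [Finset.insert_eq_self.mpr h]; exact Nat.le_add_left _ _
  · rw [Finset.sum_insert h]

lemma sum_triple_le (f : ℕ → ℕ) (a b c : ℕ) :
    ({a, b, c} : Finset ℕ).sum f ≤ f a + f b + f c := by
  refine (sum_insert_le' f a _).trans ?_
  have h2 : ({b, c} : Finset ℕ).sum f ≤ f b + f c := by
    refine (sum_insert_le' f b _).trans ?_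
    rw [Finset.sum_singleton]
  omega

lemma sum_quad_le (f : ℕ → ℕ) (a b c d : ℕ) :
    ({a, b, c, d} : Finset ℕ).sum f ≤ f a + f b + f c + f d := by
  refine (sum_insert_le' f a _).trans ?_
  have h2 := sum_triple_le f b c d
  omega

lemma two_le_card {α : Type*} {s : Finset α} {x y : α}
    (hx : x ∈ s) (hy : y ∈ s) (hxy : x ≠ y) : 2 ≤ s.card :=
  Finset.one_lt_card.mpr ⟨x, hx, y, hy, hxy⟩

lemma three_le_card {α : Type*} [DecidableEq α] {s : Finset α} {x y z : α}
    (hx : x ∈ s) (hy : y ∈ s) (hz : z ∈ s)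
    (hxy : x ≠ y) (hxz : x ≠ z) (hyz : y ≠ z) : 3 ≤ s.card := by
  have hsub : ({x, y, z} : Finset α) ⊆ s := by
    intro a ha
    rcases Finset.mem_insert.mp ha with rfl | ha
    · exact hx
    rcases Finset.mem_insert.mp ha with rfl | ha
    · exact hy
    · rwa [Finset.mem_singleton.mp ha]
  have hc : ({x, y, z} : Finset α).card = 3 := by
    rw [Finset.card_insert_of_notMem (by simp [hxy, hxz]),
        Finset.card_insert_of_notMem (by simp [hyz]), Finset.card_singleton]
  exact hc ▸ Finset.card_le_card hsub


section Constraints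
variable {k : ℕ} {S : Finset (Option (Fin n))}

lemma cons01 (hn : 6 ≤ n) (hgen : ∀ u v : Option (Fin n), u ≠ v → k ≤ (S ∩ Dfin n u v).card) :
    k ≤ fS n S 0 + fS n S 1 + fS n S 2 := by
  refine (constraint hgen (i := 0) (j := 1) (by omega) (by omega) (by omega) {0, 1, 2} ?_).trans
    (sum_triple_le _ _ _ _)
  intro l hl h
  simp only [Finset.mem_insert, Finset.mem_singleton]
  omega

lemma cons02 (hn : 6 ≤ n) (hgen : ∀ u v : Option (Fin n), u ≠ v → k ≤ (S ∩ Dfin n u v).card) :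
    k ≤ fS n S 0 + fS n S 2 + fS n S 3 := by
  refine (constraint hgen (i := 0) (j := 2) (by omega) (by omega) (by omega) {0, 2, 3} ?_).trans
    (sum_triple_le _ _ _ _)
  intro l hl h
  simp only [Finset.mem_insert, Finset.mem_singleton]
  omega

lemma consN1 (hn : 6 ≤ n) (hgen : ∀ u v : Option (Fin n), u ≠ v → k ≤ (S ∩ Dfin n u v).card) :
    k ≤ fS n S (n-3) + fS n S (n-2) + fS n S (n-1) := by
  refine (constraint hgen (i := n-2) (j := n-1) (by omega) (by omega) (by omega)
    {n-3, n-2, n-1} ?_).trans (sum_triple_le _ _ _ _)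
  intro l hl h
  simp only [Finset.mem_insert, Finset.mem_singleton]
  omega

lemma consN2 (hn : 6 ≤ n) (hgen : ∀ u v : Option (Fin n), u ≠ v → k ≤ (S ∩ Dfin n u v).card) :
    k ≤ fS n S (n-4) + fS n S (n-3) + fS n S (n-1) := by
  refine (constraint hgen (i := n-3) (j := n-1) (by omega) (by omega) (by omega)
    {n-4, n-3, n-1} ?_).trans (sum_triple_le _ _ _ _)
  intro l hl h
  simp only [Finset.mem_insert, Finset.mem_singleton]
  omega

lemma consAdj (hgen : ∀ u v : Option (Fin n), u ≠ v → k ≤ (S ∩ Dfin n u v).card)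
    (i : ℕ) (h1 : 1 ≤ i) (h2 : i + 2 < n) :
    k ≤ fS n S (i-1) + fS n S i + fS n S (i+1) + fS n S (i+2) := by
  refine (constraint hgen (i := i) (j := i+1) (by omega) (by omega) (by omega)
    {i-1, i, i+1, i+2} ?_).trans (sum_quad_le _ _ _ _ _)
  intro l hl h
  simp only [Finset.mem_insert, Finset.mem_singleton]
  omega

lemma consSkip (hgen : ∀ u v : Option (Fin n), u ≠ v → k ≤ (S ∩ Dfin n u v).card)
    (i : ℕ) (h1 : 1 ≤ i) (h2 : i + 3 < n) :
    k ≤ fS n S (i-1) + fS n S i + fS n S (i+2) + fS n S (i+3) := by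
  refine (constraint hgen (i := i) (j := i+2) (by omega) (by omega) (by omega)
    {i-1, i, i+2, i+3} ?_).trans (sum_quad_le _ _ _ _ _)
  intro l hl h
  simp only [Finset.mem_insert, Finset.mem_singleton]
  omega

end Constraints


def Apath (n : ℕ) (S : Finset (Option (Fin n))) : Finset ℕ :=
  (Finset.range n).filter (fun i => ι n i ∈ S)

def Bpath (n : ℕ) (S : Finset (Option (Fin n))) : Finset ℕ :=
  (Finset.range n).filter (fun i => ¬ (ι n i ∈ S))

lemma Apath_card_le {S : Finset (Option (Fin n))} : (Apath n S).card ≤ S.card := by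
  refine Finset.card_le_card_of_injOn (ι n) (fun i hi => (Finset.mem_filter.mp hi).2) ?_
  intro i hi j hj h
  exact ι_inj (Finset.mem_range.mp (Finset.mem_filter.mp hi).1)
    (Finset.mem_range.mp (Finset.mem_filter.mp hj).1) h

lemma Apath_add_Bpath {S : Finset (Option (Fin n))} :
    (Apath n S).card + (Bpath n S).card = n := by
  have := Finset.card_filter_add_card_filter_not
    (s := Finset.range n) (p := fun i => ι n i ∈ S)
  simpa [Apath, Bpath] using this

lemma Apath_card_eq_sum {S : Finset (Option (Fin n))} :
    (Apath n S).card = ∑ i ∈ Finset.range n, fS n S i := by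
  rw [Apath, Finset.card_filter]
  exact Finset.sum_congr rfl fun i hi => by
    simp [fS, Finset.mem_range.mp hi]

lemma fS_eq_zero {S : Finset (Option (Fin n))} {i : ℕ} (h : ¬ (ι n i ∈ S)) : fS n S i = 0 := by
  simp [fS, h]

lemma dim3_lower (hn : 6 ≤ n) {S : Finset (Option (Fin n))}
    (hgen : ∀ u v : Option (Fin n), u ≠ v → 3 ≤ (S ∩ Dfin n u v).card) :
    n - (n - 4) / 5 ≤ S.card := by
  have hf : ∀ i, fS n S i ≤ 1 := fun i => fS_le_one
  have h01 := cons01 hn hgen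
  have h02 := cons02 hn hgen
  have hN1 := consN1 hn hgen
  have hN2 := consN2 hn hgen
  have hends : fS n S 0 = 1 ∧ fS n S 1 = 1 ∧ fS n S 2 = 1 ∧ fS n S 3 = 1 ∧
      fS n S (n-1) = 1 ∧ fS n S (n-2) = 1 ∧ fS n S (n-3) = 1 ∧ fS n S (n-4) = 1 := by
    have := hf 0; have := hf 1; have := hf 2; have := hf 3
    have := hf (n-1); have := hf (n-2); have := hf (n-3); have := hf (n-4)
    omega
  have hBlow : ∀ i, i < n → fS n S i = 0 → 4 ≤ i ∧ i + 5 ≤ n := by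
    intro i hi hfi
    rcases (by omega : i = n-1 ∨ i = n-2 ∨ i = n-3 ∨ i = n-4 ∨ i = 0 ∨ i = 1 ∨ i = 2 ∨ i = 3 ∨
      (4 ≤ i ∧ i + 5 ≤ n)) with rfl|rfl|rfl|rfl|rfl|rfl|rfl|rfl|h <;> omega
  have hgap : ∀ b b', b < b' → b' < n → fS n S b = 0 → fS n S b' = 0 → b + 5 ≤ b' := by
    intro b b' hlt hb' hfb hfb'
    have hb4 : 4 ≤ b ∧ b + 5 ≤ n := hBlow b (by omega) hfb
    have hb'4 : 4 ≤ b' ∧ b' + 5 ≤ n := hBlow b' hb' hfb'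
    by_contra hcon
    rcases (by omega : b' = b + 4 ∨ b' ≤ b + 3) with rfl | hle
    · have hc := consSkip hgen (b+1) (by omega) (by omega)
      rw [(by omega : b+1-1 = b), (by omega : b+1+3 = b+4)] at hc
      have := hf (b+1); have := hf (b+1+2)
      omega
    · have hc := consAdj hgen (b'-2) (by omega) (by omega)
      rw [(by omega : b'-2-1 = b'-3), (by omega : b'-2+1 = b'-1),
          (by omega : b'-2+2 = b')] at hc
      have := hf (b'-3); have := hf (b'-2); have := hf (b'-1)
      rcases (by omega : b'-3 = b ∨ b'-2 = b ∨ b'-1 = b) with h|h|h <;> rw [h] at hc <;> omega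
  have hBcard : (Bpath n S).card ≤ (n - 4) / 5 := by
    have hmem : ∀ b ∈ Bpath n S, fS n S b = 0 ∧ b < n := by
      intro b hb
      have := Finset.mem_filter.mp hb
      exact ⟨fS_eq_zero this.2, Finset.mem_range.mp this.1⟩
    have hcard : (Bpath n S).card ≤ (Finset.range ((n-4)/5)).card := by
      refine Finset.card_le_card_of_injOn (fun b => (b - 4) / 5) ?_ ?_
      · intro b hb
        obtain ⟨hfb, hbn⟩ := hmem b hb
        have := hBlow b hbn hfb
        simp only [Finset.mem_coe, Finset.mem_range]
        omega
      · intro b hb b' hb' heq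
        obtain ⟨hfb, hbn⟩ := hmem b hb
        obtain ⟨hfb', hbn'⟩ := hmem b' hb'
        simp only at heq
        by_contra hne
        rcases Nat.lt_or_ge b b' with h | h
        · have := hgap b b' h hbn' hfb hfb'
          have := (hBlow b hbn hfb).1
          omega
        · have hlt : b' < b := by omega
          have := hgap b' b hlt hbn hfb' hfb
          have := (hBlow b' hbn' hfb').1
          omega
    simpa using hcard
  have h1 := Apath_add_Bpath (n := n) (S := S)
  have h2 := Apath_card_le (n := n) (S := S)
  omega


lemma sum_pair (f : ℕ → ℕ) (m : ℕ) :
    ∑ i ∈ Finset.range (2*m), f i = ∑ t ∈ Finset.range m, (f (2*t) + f (2*t+1)) := by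
  induction m with
  | zero => simp
  | succ m ih =>
    rw [Finset.sum_range_succ, ← ih, (by omega : 2*(m+1) = 2*m+1+1),
        Finset.sum_range_succ, Finset.sum_range_succ]
    omega

lemma fwd (b : ℕ → ℕ) (m : ℕ) (hadj : ∀ t, t+1 < m → 2 ≤ b t + b (t+1)) (h0 : 1 ≤ b 0) :
    ∀ j, j ≤ m → j ≤ ∑ t ∈ Finset.range j, b t := by
  intro j
  induction j using Nat.strong_induction_on with
  | _ j ih =>
    intro hj
    rcases (by omega : j = 0 ∨ j = 1 ∨ 2 ≤ j) with rfl | rfl | h2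
    · simp
    · simpa using h0
    · have hih := ih (j-2) (by omega) (by omega)
      have hadj' := hadj (j-2) (by omega)
      rw [(by omega : j = j-2+1+1), Finset.sum_range_succ, Finset.sum_range_succ]
      omega

lemma ones (b : ℕ → ℕ) : ∀ (m : ℕ), 3 ≤ m → (∀ t, t+1 < m → 2 ≤ b t + b (t+1)) →
    1 ≤ b 0 → 1 ≤ b (m-1) → (∑ t ∈ Finset.range m, b t ≤ m) →
    ∀ t, t < m → b t = 1 := by
  intro m
  induction m with
  | zero => omega
  | succ m ih =>
    intro hm hadj h0 hlast hsum
    rcases (by omega : m = 2 ∨ 3 ≤ m) with rfl | hm3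
    · have ha1 : 2 ≤ b 0 + b 1 := by have := hadj 0 (by omega); norm_num at this; exact this
      have ha2 : 2 ≤ b 1 + b 2 := by have := hadj 1 (by omega); norm_num at this; exact this
      rw [Finset.sum_range_succ, Finset.sum_range_succ, Finset.sum_range_succ,
          Finset.sum_range_zero] at hsum
      have hl : 1 ≤ b 2 := by have := hlast; norm_num at this; exact this
      intro t ht
      rcases (by omega : t = 0 ∨ t = 1 ∨ t = 2) with rfl | rfl | rfl <;> omega
    · have hfw := fwd b (m+1) hadj h0 m (by omega)
      rw [Finset.sum_range_succ] at hsum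
      have hbm : 1 ≤ b m := by simpa using hlast
      have hbm1 : 1 ≤ b (m-1) := by
        have := hadj (m-1) (by omega)
        rw [(by omega : m-1+1 = m)] at this
        omega
      have hrec := ih hm3 (fun t ht => hadj t (by omega)) h0 hbm1 (by omega)
      intro t ht
      rcases (by omega : t < m ∨ t = m) with h | rfl
      · exact hrec t h
      · omega

lemma switch (P : ℕ → Prop) (a c : ℕ) (hac : a ≤ c) (hPa : P a) (hPc : ¬ P c) :
    ∃ t, a ≤ t ∧ t < c ∧ P t ∧ ¬ P (t+1) := by
  by_contra h
  push_neg at h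
  have hall : ∀ d, a ≤ d → d ≤ c → P d := by
    intro d had
    induction d, had using Nat.le_induction with
    | base => intro _; exact hPa
    | succ d hd ihd => intro hdc; exact h d hd (by omega) (ihd (by omega))
  exact hPc (hall c hac le_rfl)

lemma dim2_lower (hn : 6 ≤ n) {S : Finset (Option (Fin n))}
    (hgen : ∀ u v : Option (Fin n), u ≠ v → 2 ≤ (S ∩ Dfin n u v).card) :
    (n + 2) / 2 ≤ S.card := by
  by_contra hcon
  push_neg at hcon
  have hf : ∀ i, fS n S i ≤ 1 := fun i => fS_le_one
  have h01 := cons01 hn hgen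
  have h02 := cons02 hn hgen
  have hN1 := consN1 hn hgen
  have hN2 := consN2 hn hgen
  have hAle : (Apath n S).card ≤ S.card := Apath_card_le
  have hcardA : (Apath n S).card = ∑ i ∈ Finset.range n, fS n S i := Apath_card_eq_sum
  obtain ⟨m, hsplit⟩ : ∃ m, n = 2*m ∨ n = 2*m+1 := ⟨n/2, by omega⟩
  set b : ℕ → ℕ := fun t => fS n S (2*t) + fS n S (2*t+1) with hbdef
  have hadj : ∀ t, t+1 < m → 2 ≤ b t + b (t+1) := by
    intro t ht
    have hc := consAdj hgen (2*t+1) (by omega) (by omega)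
    rw [(by omega : 2*t+1-1 = 2*t), (by omega : 2*t+1+1 = 2*(t+1)),
        (by omega : 2*t+1+2 = 2*(t+1)+1)] at hc
    simp only [hbdef]
    omega
  have hb0 : 1 ≤ b 0 := by
    simp only [hbdef]
    norm_num
    have := hf 2
    omega
  rcases hsplit with hE | hO
  · -- n even, n = 2m
    have hsum : ∑ t ∈ Finset.range m, b t ≤ m := by
      have : ∑ i ∈ Finset.range n, fS n S i ≤ m := by omega
      calc ∑ t ∈ Finset.range m, b t = ∑ i ∈ Finset.range (2*m), fS n S i :=
            (sum_pair _ _).symm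
        _ = ∑ i ∈ Finset.range n, fS n S i := by rw [← hE]
        _ ≤ m := this
    have hlast : 1 ≤ b (m-1) := by
      simp only [hbdef]
      rw [(by omega : 2*(m-1)+1 = n-1), (by omega : 2*(m-1) = n-2)]
      have := hf (n-3)
      omega
    have hones := ones b m (by omega) hadj hb0 hlast hsum
    have hbt : ∀ t, t < m → fS n S (2*t) + fS n S (2*t+1) = 1 := by
      intro t ht
      have := hones t ht
      simpa [hbdef] using this
    have hb0' := hbt 0 (by omega)
    rw [(by norm_num : 2*0 = 0), (by norm_num : 2*0+1 = 1)] at hb0'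
    have hb1' := hbt 1 (by omega)
    rw [(by norm_num : 2*1 = 2), (by norm_num : 2*1+1 = 3)] at hb1'
    have hf2 : fS n S 2 = 1 := by have := hf 2; omega
    have hbm1' := hbt (m-1) (by omega)
    rw [(by omega : 2*(m-1)+1 = n-1), (by omega : 2*(m-1) = n-2)] at hbm1'
    have hbm2' := hbt (m-2) (by omega)
    rw [(by omega : 2*(m-2)+1 = n-3), (by omega : 2*(m-2) = n-4)] at hbm2'
    have hfn3 : fS n S (n-3) = 1 := by have := hf (n-3); omega
    have hfn4 : fS n S (n-4) = 0 := by omega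
    -- switch argument
    obtain ⟨t, ht1, ht2, hPt, hPt1⟩ :=
      switch (fun t => fS n S (2*t) = 1) 1 (m-2) (by omega)
        (by show fS n S (2*1) = 1; rw [(by norm_num : 2*1 = 2)]; exact hf2)
        (by intro hcontra
            have hcontra' : fS n S (2*(m-2)) = 1 := hcontra
            rw [(by omega : 2*(m-2) = n-4)] at hcontra'; omega)
    have hPt' : fS n S (2*t) = 1 := hPt
    have hPt1' : fS n S (2*(t+1)) ≠ 1 := fun hh => hPt1 hh
    have hbt' := hbt t (by omega)
    have hbt2 := hbt (t+2) (by omega)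
    rw [(by omega : 2*(t+2)+1 = 2*t+5), (by omega : 2*(t+2) = 2*t+4)] at hbt2
    have hf2t2 : fS n S (2*(t+1)) ≤ 1 := hf _
    rw [(by omega : 2*(t+1) = 2*t+2)] at hf2t2 hPt1'
    have hsk := consSkip hgen (2*t+2) (by omega) (by omega)
    rw [(by omega : 2*t+2-1 = 2*t+1), (by omega : 2*t+2+2 = 2*t+4),
        (by omega : 2*t+2+3 = 2*t+5)] at hsk
    omega
  · -- n odd, n = 2m+1
    have hm3 : 3 ≤ m := by omega
    have htot : ∑ i ∈ Finset.range n, fS n S i ≤ m := by omega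
    have hdecomp : ∑ i ∈ Finset.range n, fS n S i
        = ∑ t ∈ Finset.range m, b t + fS n S (2*m) := by
      rw [show Finset.range n = Finset.range (2*m+1) from by rw [hO], Finset.sum_range_succ]
      congr 1
      rw [sum_pair]
    have hfw := fwd b m hadj hb0 m le_rfl
    have hf2m : fS n S (2*m) = 0 := by omega
    have hsumb : ∑ t ∈ Finset.range m, b t = m := by omega
    have hbm1 : b (m-1) = 2 := by
      simp only [hbdef]
      rw [(by omega : 2*(m-1)+1 = n-2), (by omega : 2*(m-1) = n-3)]
      have h2m : fS n S (n-1) = 0 := by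
        rw [(by omega : n-1 = 2*m)]; exact hf2m
      have := hf (n-3); have := hf (n-2)
      omega
    have hfw2 := fwd b m hadj hb0 (m-1) (by omega)
    have hsplitsum : ∑ t ∈ Finset.range (m-1+1), b t
        = ∑ t ∈ Finset.range (m-1), b t + b (m-1) := Finset.sum_range_succ b (m-1)
    rw [(by omega : m-1+1 = m)] at hsplitsum
    omega


lemma mem_Dfin_ι {i j a : ℕ} (hi : i < n) (hj : j < n) (ha : a < n)
    (h : a = i ∨ a = j ∨ ¬ ((i+1 = a ∨ a+1 = i) ↔ (j+1 = a ∨ a+1 = j))) :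
    ι n a ∈ Dfin n (ι n i) (ι n j) := by
  rw [mem_Dfin]
  rcases h with rfl | rfl | h
  · exact Or.inl rfl
  · exact Or.inr (Or.inl rfl)
  · exact Or.inr (Or.inr (by rw [adj_ι_ι hi ha, adj_ι_ι hj ha]; exact h))

lemma mem_Dfin_none {j a : ℕ} (hj : j < n) (ha : a < n)
    (h : a = j ∨ ¬ (j+1 = a ∨ a+1 = j)) :
    ι n a ∈ Dfin n none (ι n j) := by
  rw [mem_Dfin]
  rcases h with rfl | h
  · exact Or.inr (Or.inl rfl)
  · refine Or.inr (Or.inr fun hiff => ?_)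
    have := hiff.mp (adj_none_ι ha)
    rw [adj_ι_ι hj ha] at this
    exact h this

def S3 (n : ℕ) : Finset (Option (Fin n)) :=
  ((Finset.range n).filter (fun i => ¬ (4 ≤ i ∧ i + 5 ≤ n ∧ (i - 4) % 5 = 0))).image (ι n)

lemma mem_S3 {i : ℕ} (hi : i < n) :
    ι n i ∈ S3 n ↔ ¬ (4 ≤ i ∧ i + 5 ≤ n ∧ (i - 4) % 5 = 0) := by
  constructor
  · intro h
    obtain ⟨j, hj, hji⟩ := Finset.mem_image.mp h
    obtain ⟨hjr, hjp⟩ := Finset.mem_filter.mp hj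
    rwa [ι_inj (Finset.mem_range.mp hjr) hi hji] at hjp
  · intro h
    exact Finset.mem_image.mpr ⟨i, Finset.mem_filter.mpr ⟨Finset.mem_range.mpr hi, h⟩, rfl⟩

lemma S3_card (hn : 6 ≤ n) : (S3 n).card = n - (n - 4) / 5 := by
  rw [S3, Finset.card_image_of_injOn (fun i hi j hj h =>
    ι_inj (Finset.mem_range.mp (Finset.mem_filter.mp hi).1)
      (Finset.mem_range.mp (Finset.mem_filter.mp hj).1) h)]
  have h1 := Finset.card_filter_add_card_filter_not
    (s := Finset.range n) (p := fun i => 4 ≤ i ∧ i + 5 ≤ n ∧ (i - 4) % 5 = 0)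
  have h2 : (Finset.range n).filter (fun i => 4 ≤ i ∧ i + 5 ≤ n ∧ (i - 4) % 5 = 0)
      = (Finset.range ((n-4)/5)).image (fun t => 5*t+4) := by
    ext a
    simp only [Finset.mem_filter, Finset.mem_range, Finset.mem_image]
    constructor
    · rintro ⟨han, h4, h5n, hmod⟩
      exact ⟨(a-4)/5, by omega, by omega⟩
    · rintro ⟨t, ht, rfl⟩
      omega
  have hinj : Function.Injective (fun t : ℕ => 5*t+4) := by
    intro a b h
    simp only [] at h
    omega
  have h3 : ((Finset.range n).filter (fun i => 4 ≤ i ∧ i + 5 ≤ n ∧ (i - 4) % 5 = 0)).card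
      = (n-4)/5 := by
    rw [h2, Finset.card_image_of_injective _ hinj]
    simp
  rw [Finset.card_range n] at h1
  omega


lemma three_in {u v : Option (Fin n)} {S : Finset (Option (Fin n))} (a b c : ℕ)
    (ha : a < n) (hb : b < n) (hc : c < n)
    (hab : a ≠ b) (hac : a ≠ c) (hbc : b ≠ c)
    (haS : ι n a ∈ S) (hbS : ι n b ∈ S) (hcS : ι n c ∈ S)
    (haD : ι n a ∈ Dfin n u v) (hbD : ι n b ∈ Dfin n u v) (hcD : ι n c ∈ Dfin n u v) :
    3 ≤ (S ∩ Dfin n u v).card := by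
  classical
  refine three_le_card (Finset.mem_inter.mpr ⟨haS, haD⟩) (Finset.mem_inter.mpr ⟨hbS, hbD⟩)
    (Finset.mem_inter.mpr ⟨hcS, hcD⟩) ?_ ?_ ?_ <;> intro h
  · exact hab (ι_inj ha hb h)
  · exact hac (ι_inj ha hc h)
  · exact hbc (ι_inj hb hc h)

lemma gen3_center (hn : 6 ≤ n) {j : ℕ} (hj : j < n) :
    3 ≤ ((S3 n) ∩ Dfin n none (ι n j)).card := by
  have hS : ∀ a, a < n → ¬ (4 ≤ a ∧ a + 5 ≤ n ∧ (a-4)%5 = 0) → ι n a ∈ S3 n :=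
    fun a ha h => (mem_S3 ha).mpr h
  rcases (by omega : j = 0 ∨ j = 1 ∨ j = 2 ∨ j = 3 ∨ 4 ≤ j) with rfl|rfl|rfl|rfl|h4
  · exact three_in 0 2 3 (by omega) (by omega) (by omega) (by omega) (by omega) (by omega)
      (hS _ (by omega) (by omega)) (hS _ (by omega) (by omega)) (hS _ (by omega) (by omega))
      (mem_Dfin_none hj (by omega) (by omega)) (mem_Dfin_none hj (by omega) (by omega))
      (mem_Dfin_none hj (by omega) (by omega))
  · exact three_in 1 3 (n-1) (by omega) (by omega) (by omega) (by omega) (by omega) (by omega)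
      (hS _ (by omega) (by omega)) (hS _ (by omega) (by omega)) (hS _ (by omega) (by omega))
      (mem_Dfin_none hj (by omega) (by omega)) (mem_Dfin_none hj (by omega) (by omega))
      (mem_Dfin_none hj (by omega) (by omega))
  · exact three_in 0 2 (n-1) (by omega) (by omega) (by omega) (by omega) (by omega) (by omega)
      (hS _ (by omega) (by omega)) (hS _ (by omega) (by omega)) (hS _ (by omega) (by omega))
      (mem_Dfin_none hj (by omega) (by omega)) (mem_Dfin_none hj (by omega) (by omega))
      (mem_Dfin_none hj (by omega) (by omega))
  · exact three_in 0 1 3 (by omega) (by omega) (by omega) (by omega) (by omega) (by omega)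
      (hS _ (by omega) (by omega)) (hS _ (by omega) (by omega)) (hS _ (by omega) (by omega))
      (mem_Dfin_none hj (by omega) (by omega)) (mem_Dfin_none hj (by omega) (by omega))
      (mem_Dfin_none hj (by omega) (by omega))
  · exact three_in 0 1 2 (by omega) (by omega) (by omega) (by omega) (by omega) (by omega)
      (hS _ (by omega) (by omega)) (hS _ (by omega) (by omega)) (hS _ (by omega) (by omega))
      (mem_Dfin_none hj (by omega) (by omega)) (mem_Dfin_none hj (by omega) (by omega))
      (mem_Dfin_none hj (by omega) (by omega))

lemma gen3_pair (hn : 6 ≤ n) {i j : ℕ} (hij : i < j) (hj : j < n) :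
    3 ≤ ((S3 n) ∩ Dfin n (ι n i) (ι n j)).card := by
  have hi : i < n := by omega
  have hS : ∀ a, a < n → ¬ (4 ≤ a ∧ a + 5 ≤ n ∧ (a-4)%5 = 0) → ι n a ∈ S3 n :=
    fun a ha h => (mem_S3 ha).mpr h
  rcases (by omega : j = i+1 ∨ j = i+2 ∨ i+3 ≤ j) with rfl | rfl | h3
  · -- adjacent pair
    rcases (by omega : i = 0 ∨ i+2 = n ∨ (1 ≤ i ∧ i+3 ≤ n)) with rfl | he | hint
    · exact three_in 0 1 2 (by omega) (by omega) (by omega) (by omega) (by omega) (by omega)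
        (hS _ (by omega) (by omega)) (hS _ (by omega) (by omega)) (hS _ (by omega) (by omega))
        (mem_Dfin_ι hi hj (by omega) (by omega)) (mem_Dfin_ι hi hj (by omega) (by omega))
        (mem_Dfin_ι hi hj (by omega) (by omega))
    · exact three_in (i-1) i (i+1) (by omega) (by omega) (by omega) (by omega) (by omega)
        (by omega)
        (hS _ (by omega) (by omega)) (hS _ (by omega) (by omega)) (hS _ (by omega) (by omega))
        (mem_Dfin_ι hi hj (by omega) (by omega)) (mem_Dfin_ι hi hj (by omega) (by omega))
        (mem_Dfin_ι hi hj (by omega) (by omega))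
    · by_cases b1 : (4 ≤ i-1 ∧ i-1+5 ≤ n ∧ (i-1-4)%5 = 0)
      · exact three_in i (i+1) (i+2) (by omega) (by omega) (by omega) (by omega) (by omega)
          (by omega)
          (hS _ (by omega) (by omega)) (hS _ (by omega) (by omega)) (hS _ (by omega) (by omega))
          (mem_Dfin_ι hi hj (by omega) (by omega)) (mem_Dfin_ι hi hj (by omega) (by omega))
          (mem_Dfin_ι hi hj (by omega) (by omega))
      · by_cases b2 : (4 ≤ i ∧ i+5 ≤ n ∧ (i-4)%5 = 0)
        · exact three_in (i-1) (i+1) (i+2) (by omega) (by omega) (by omega) (by omega)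
            (by omega) (by omega)
            (hS _ (by omega) (by omega)) (hS _ (by omega) (by omega)) (hS _ (by omega) (by omega))
            (mem_Dfin_ι hi hj (by omega) (by omega)) (mem_Dfin_ι hi hj (by omega) (by omega))
            (mem_Dfin_ι hi hj (by omega) (by omega))
        · by_cases b3 : (4 ≤ i+1 ∧ i+1+5 ≤ n ∧ (i+1-4)%5 = 0)
          · exact three_in (i-1) i (i+2) (by omega) (by omega) (by omega) (by omega) (by omega)
              (by omega)
              (hS _ (by omega) (by omega)) (hS _ (by omega) (by omega))
              (hS _ (by omega) (by omega))
              (mem_Dfin_ι hi hj (by omega) (by omega)) (mem_Dfin_ι hi hj (by omega) (by omega))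
              (mem_Dfin_ι hi hj (by omega) (by omega))
          · exact three_in (i-1) i (i+1) (by omega) (by omega) (by omega) (by omega) (by omega)
              (by omega)
              (hS _ (by omega) (by omega)) (hS _ (by omega) (by omega))
              (hS _ (by omega) (by omega))
              (mem_Dfin_ι hi hj (by omega) (by omega)) (mem_Dfin_ι hi hj (by omega) (by omega))
              (mem_Dfin_ι hi hj (by omega) (by omega))
  · -- distance-two pair
    rcases (by omega : i = 0 ∨ i+3 = n ∨ (1 ≤ i ∧ i+4 ≤ n)) with rfl | he | hint
    · exact three_in 0 2 3 (by omega) (by omega) (by omega) (by omega) (by omega) (by omega)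
        (hS _ (by omega) (by omega)) (hS _ (by omega) (by omega)) (hS _ (by omega) (by omega))
        (mem_Dfin_ι hi hj (by omega) (by omega)) (mem_Dfin_ι hi hj (by omega) (by omega))
        (mem_Dfin_ι hi hj (by omega) (by omega))
    · exact three_in (i-1) i (i+2) (by omega) (by omega) (by omega) (by omega) (by omega)
        (by omega)
        (hS _ (by omega) (by omega)) (hS _ (by omega) (by omega)) (hS _ (by omega) (by omega))
        (mem_Dfin_ι hi hj (by omega) (by omega)) (mem_Dfin_ι hi hj (by omega) (by omega))
        (mem_Dfin_ι hi hj (by omega) (by omega))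
    · by_cases b1 : (4 ≤ i-1 ∧ i-1+5 ≤ n ∧ (i-1-4)%5 = 0)
      · exact three_in i (i+2) (i+3) (by omega) (by omega) (by omega) (by omega) (by omega)
          (by omega)
          (hS _ (by omega) (by omega)) (hS _ (by omega) (by omega)) (hS _ (by omega) (by omega))
          (mem_Dfin_ι hi hj (by omega) (by omega)) (mem_Dfin_ι hi hj (by omega) (by omega))
          (mem_Dfin_ι hi hj (by omega) (by omega))
      · by_cases b2 : (4 ≤ i ∧ i+5 ≤ n ∧ (i-4)%5 = 0)
        · exact three_in (i-1) (i+2) (i+3) (by omega) (by omega) (by omega) (by omega)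
            (by omega) (by omega)
            (hS _ (by omega) (by omega)) (hS _ (by omega) (by omega)) (hS _ (by omega) (by omega))
            (mem_Dfin_ι hi hj (by omega) (by omega)) (mem_Dfin_ι hi hj (by omega) (by omega))
            (mem_Dfin_ι hi hj (by omega) (by omega))
        · by_cases b3 : (4 ≤ i+2 ∧ i+2+5 ≤ n ∧ (i+2-4)%5 = 0)
          · exact three_in (i-1) i (i+3) (by omega) (by omega) (by omega) (by omega) (by omega)
              (by omega)
              (hS _ (by omega) (by omega)) (hS _ (by omega) (by omega))
              (hS _ (by omega) (by omega))
              (mem_Dfin_ι hi hj (by omega) (by omega)) (mem_Dfin_ι hi hj (by omega) (by omega))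
              (mem_Dfin_ι hi hj (by omega) (by omega))
          · exact three_in (i-1) i (i+2) (by omega) (by omega) (by omega) (by omega) (by omega)
              (by omega)
              (hS _ (by omega) (by omega)) (hS _ (by omega) (by omega))
              (hS _ (by omega) (by omega))
              (mem_Dfin_ι hi hj (by omega) (by omega)) (mem_Dfin_ι hi hj (by omega) (by omega))
              (mem_Dfin_ι hi hj (by omega) (by omega))
  · -- far pair : two witnesses near i, one near j
    have hright : ∃ r, r < n ∧ j-1 ≤ r ∧ r ≤ j ∧ ¬ (4 ≤ r ∧ r+5 ≤ n ∧ (r-4)%5 = 0) ∧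
        (r = i ∨ r = j ∨ ¬ ((i+1 = r ∨ r+1 = i) ↔ (j+1 = r ∨ r+1 = j))) := by
      by_cases bj : (4 ≤ j ∧ j+5 ≤ n ∧ (j-4)%5 = 0)
      · exact ⟨j-1, by omega, by omega, by omega, by omega, by omega⟩
      · exact ⟨j, by omega, by omega, by omega, by omega, by omega⟩
    obtain ⟨r, hr1, hr2, hr3, hr4, hr5⟩ := hright
    have hrD : ι n r ∈ Dfin n (ι n i) (ι n j) := mem_Dfin_ι hi hj hr1 hr5
    have hrS : ι n r ∈ S3 n := hS r hr1 hr4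
    rcases (by omega : i = 0 ∨ 1 ≤ i) with rfl | hi1
    · exact three_in 0 1 r (by omega) (by omega) hr1 (by omega) (by omega) (by omega)
        (hS _ (by omega) (by omega)) (hS _ (by omega) (by omega)) hrS
        (mem_Dfin_ι hi hj (by omega) (by omega)) (mem_Dfin_ι hi hj (by omega) (by omega)) hrD
    · by_cases b1 : (4 ≤ i-1 ∧ i-1+5 ≤ n ∧ (i-1-4)%5 = 0)
      · exact three_in i (i+1) r (by omega) (by omega) hr1 (by omega) (by omega) (by omega)
          (hS _ (by omega) (by omega)) (hS _ (by omega) (by omega)) hrS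
          (mem_Dfin_ι hi hj (by omega) (by omega)) (mem_Dfin_ι hi hj (by omega) (by omega)) hrD
      · by_cases b2 : (4 ≤ i ∧ i+5 ≤ n ∧ (i-4)%5 = 0)
        · exact three_in (i-1) (i+1) r (by omega) (by omega) hr1 (by omega) (by omega)
            (by omega)
            (hS _ (by omega) (by omega)) (hS _ (by omega) (by omega)) hrS
            (mem_Dfin_ι hi hj (by omega) (by omega)) (mem_Dfin_ι hi hj (by omega) (by omega)) hrD
        · exact three_in (i-1) i r (by omega) (by omega) hr1 (by omega) (by omega) (by omega)
            (hS _ (by omega) (by omega)) (hS _ (by omega) (by omega)) hrS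
            (mem_Dfin_ι hi hj (by omega) (by omega)) (mem_Dfin_ι hi hj (by omega) (by omega)) hrD

lemma gen3 (hn : 6 ≤ n) : ∀ u v : Option (Fin n), u ≠ v →
    3 ≤ ((S3 n) ∩ Dfin n u v).card := by
  intro u v huv
  rcases vertex_cases u with rfl | ⟨i, hi, rfl⟩ <;> rcases vertex_cases v with rfl | ⟨j, hj, rfl⟩
  · exact absurd rfl huv
  · exact gen3_center hn hj
  · rw [Dfin_comm]; exact gen3_center hn hi
  · rcases Nat.lt_trichotomy i j with h | h | h
    · exact gen3_pair hn h hj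
    · exact absurd (by rw [h]) huv
    · rw [Dfin_comm]; exact gen3_pair hn h hi


def S2 (n : ℕ) : Finset (Option (Fin n)) :=
  ((Finset.range n).filter (fun i => i % 2 = 0 ∨ i = n-1)).image (ι n)

lemma mem_S2 {i : ℕ} (hi : i < n) :
    ι n i ∈ S2 n ↔ (i % 2 = 0 ∨ i = n-1) := by
  constructor
  · intro h
    obtain ⟨j, hj, hji⟩ := Finset.mem_image.mp h
    obtain ⟨hjr, hjp⟩ := Finset.mem_filter.mp hj
    rwa [ι_inj (Finset.mem_range.mp hjr) hi hji] at hjp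
  · intro h
    exact Finset.mem_image.mpr ⟨i, Finset.mem_filter.mpr ⟨Finset.mem_range.mpr hi, h⟩, rfl⟩

lemma S2_card (hn : 6 ≤ n) : (S2 n).card = (n + 2) / 2 := by
  rw [S2, Finset.card_image_of_injOn (fun i hi j hj h =>
    ι_inj (Finset.mem_range.mp (Finset.mem_filter.mp hi).1)
      (Finset.mem_range.mp (Finset.mem_filter.mp hj).1) h)]
  have h2 : (Finset.range n).filter (fun i => i % 2 = 0 ∨ i = n-1)
      = (Finset.range ((n+2)/2)).image (fun t => min (2*t) (n-1)) := by
    ext a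
    simp only [Finset.mem_filter, Finset.mem_range, Finset.mem_image]
    constructor
    · rintro ⟨han, hcond⟩
      rcases hcond with he | rfl
      · exact ⟨a/2, by omega, by omega⟩
      · rcases Nat.even_or_odd n with he | ho
        · obtain ⟨m, hm⟩ := he
          exact ⟨n/2, by omega, by omega⟩
        · obtain ⟨m, hm⟩ := ho
          exact ⟨(n-1)/2, by omega, by omega⟩
    · rintro ⟨t, ht, rfl⟩
      omega
  rw [h2, Finset.card_image_of_injOn (fun t ht s hs h => by
    have ht' : t < (n+2)/2 := by simpa using ht
    have hs' : s < (n+2)/2 := by simpa using hs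
    omega)]
  exact Finset.card_range _

lemma two_in {u v : Option (Fin n)} {S : Finset (Option (Fin n))} (a b : ℕ)
    (ha : a < n) (hb : b < n) (hab : a ≠ b)
    (haS : ι n a ∈ S) (hbS : ι n b ∈ S)
    (haD : ι n a ∈ Dfin n u v) (hbD : ι n b ∈ Dfin n u v) :
    2 ≤ (S ∩ Dfin n u v).card := by
  classical
  exact two_le_card (Finset.mem_inter.mpr ⟨haS, haD⟩) (Finset.mem_inter.mpr ⟨hbS, hbD⟩)
    (fun h => hab (ι_inj ha hb h))

lemma gen2_center (hn : 6 ≤ n) {j : ℕ} (hj : j < n) :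
    2 ≤ ((S2 n) ∩ Dfin n none (ι n j)).card := by
  have hS : ∀ a, a < n → (a % 2 = 0 ∨ a = n-1) → ι n a ∈ S2 n :=
    fun a ha h => (mem_S2 ha).mpr h
  rcases (by omega : j = 1 ∨ j = 3 ∨ (j ≠ 1 ∧ j ≠ 3)) with rfl | rfl | ⟨h1, h3⟩
  · exact two_in 4 (n-1) (by omega) (by omega) (by omega)
      (hS _ (by omega) (by omega)) (hS _ (by omega) (by omega))
      (mem_Dfin_none hj (by omega) (by omega)) (mem_Dfin_none hj (by omega) (by omega))
  · exact two_in 0 (n-1) (by omega) (by omega) (by omega)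
      (hS _ (by omega) (by omega)) (hS _ (by omega) (by omega))
      (mem_Dfin_none hj (by omega) (by omega)) (mem_Dfin_none hj (by omega) (by omega))
  · exact two_in 0 2 (by omega) (by omega) (by omega)
      (hS _ (by omega) (by omega)) (hS _ (by omega) (by omega))
      (mem_Dfin_none hj (by omega) (by omega)) (mem_Dfin_none hj (by omega) (by omega))

lemma gen2_pair (hn : 6 ≤ n) {i j : ℕ} (hij : i < j) (hj : j < n) :
    2 ≤ ((S2 n) ∩ Dfin n (ι n i) (ι n j)).card := by
  have hi : i < n := by omega
  have hS : ∀ a, a < n → (a % 2 = 0 ∨ a = n-1) → ι n a ∈ S2 n :=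
    fun a ha h => (mem_S2 ha).mpr h
  rcases (by omega : j = i+1 ∨ j = i+2 ∨ i+3 ≤ j) with rfl | rfl | h3
  · -- adjacent pair
    rcases (by omega : i = 0 ∨ i+2 = n ∨ (1 ≤ i ∧ i+3 ≤ n)) with rfl | he | hint
    · exact two_in 0 2 (by omega) (by omega) (by omega)
        (hS _ (by omega) (by omega)) (hS _ (by omega) (by omega))
        (mem_Dfin_ι hi hj (by omega) (by omega)) (mem_Dfin_ι hi hj (by omega) (by omega))
    · rcases Nat.even_or_odd n with ⟨m, hm⟩ | ⟨m, hm⟩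
      · exact two_in (n-2) (n-1) (by omega) (by omega) (by omega)
          (hS _ (by omega) (by omega)) (hS _ (by omega) (by omega))
          (mem_Dfin_ι hi hj (by omega) (by omega)) (mem_Dfin_ι hi hj (by omega) (by omega))
      · exact two_in (n-3) (n-1) (by omega) (by omega) (by omega)
          (hS _ (by omega) (by omega)) (hS _ (by omega) (by omega))
          (mem_Dfin_ι hi hj (by omega) (by omega)) (mem_Dfin_ι hi hj (by omega) (by omega))
    · rcases (by omega : i % 2 = 0 ∨ i % 2 = 1) with hp | hp
      · exact two_in i (i+2) (by omega) (by omega) (by omega)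
          (hS _ (by omega) (by omega)) (hS _ (by omega) (by omega))
          (mem_Dfin_ι hi hj (by omega) (by omega)) (mem_Dfin_ι hi hj (by omega) (by omega))
      · exact two_in (i-1) (i+1) (by omega) (by omega) (by omega)
          (hS _ (by omega) (by omega)) (hS _ (by omega) (by omega))
          (mem_Dfin_ι hi hj (by omega) (by omega)) (mem_Dfin_ι hi hj (by omega) (by omega))
  · -- distance-two pair
    rcases (by omega : i % 2 = 0 ∨ i % 2 = 1) with hp | hp
    · exact two_in i (i+2) (by omega) (by omega) (by omega)
        (hS _ (by omega) (by omega)) (hS _ (by omega) (by omega))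
        (mem_Dfin_ι hi hj (by omega) (by omega)) (mem_Dfin_ι hi hj (by omega) (by omega))
    · rcases (by omega : i+3 = n ∨ i+4 ≤ n) with he | he
      · exact two_in (i-1) (i+2) (by omega) (by omega) (by omega)
          (hS _ (by omega) (by omega)) (hS _ (by omega) (by omega))
          (mem_Dfin_ι hi hj (by omega) (by omega)) (mem_Dfin_ι hi hj (by omega) (by omega))
      · exact two_in (i-1) (i+3) (by omega) (by omega) (by omega)
          (hS _ (by omega) (by omega)) (hS _ (by omega) (by omega))
          (mem_Dfin_ι hi hj (by omega) (by omega)) (mem_Dfin_ι hi hj (by omega) (by omega))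
  · -- far pair
    have hleft : ∃ a, a < n ∧ a ≤ i ∧ (a % 2 = 0 ∨ a = n-1) ∧
        (a = i ∨ a = j ∨ ¬ ((i+1 = a ∨ a+1 = i) ↔ (j+1 = a ∨ a+1 = j))) := by
      rcases (by omega : i % 2 = 0 ∨ i % 2 = 1) with hp | hp
      · exact ⟨i, by omega, by omega, by omega, by omega⟩
      · exact ⟨i-1, by omega, by omega, by omega, by omega⟩
    have hright : ∃ r, r < n ∧ j ≤ r ∧ (r % 2 = 0 ∨ r = n-1) ∧
        (r = i ∨ r = j ∨ ¬ ((i+1 = r ∨ r+1 = i) ↔ (j+1 = r ∨ r+1 = j))) := by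
      rcases (by omega : j % 2 = 0 ∨ j = n-1 ∨ (j % 2 = 1 ∧ j+1 < n)) with hp | hp | ⟨hp, hq⟩
      · exact ⟨j, by omega, by omega, by omega, by omega⟩
      · exact ⟨j, by omega, by omega, by omega, by omega⟩
      · exact ⟨j+1, by omega, by omega, by omega, by omega⟩
    obtain ⟨a, ha1, ha2, ha3, ha4⟩ := hleft
    obtain ⟨r, hr1, hr2, hr3, hr4⟩ := hright
    exact two_in a r ha1 hr1 (by omega)
      (hS _ ha1 ha3) (hS _ hr1 hr3)
      (mem_Dfin_ι hi hj ha1 ha4) (mem_Dfin_ι hi hj hr1 hr4)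

lemma gen2 (hn : 6 ≤ n) : ∀ u v : Option (Fin n), u ≠ v →
    2 ≤ ((S2 n) ∩ Dfin n u v).card := by
  intro u v huv
  rcases vertex_cases u with rfl | ⟨i, hi, rfl⟩ <;> rcases vertex_cases v with rfl | ⟨j, hj, rfl⟩
  · exact absurd rfl huv
  · exact gen2_center hn hj
  · rw [Dfin_comm]; exact gen2_center hn hi
  · rcases Nat.lt_trichotomy i j with h | h | h
    · exact gen2_pair hn h hj
    · exact absurd (by rw [h]) huv
    · rw [Dfin_comm]; exact gen2_pair hn h hi

end Stmt18

/-- for `n ≥ 6`, `dim₂(F_{1,n}) = ⌈(n+1)/2⌉` and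
`dim₃(F_{1,n}) = n - ⌊(n-4)/5⌋`. -/
theorem stmt_18 (n : ℕ) (hn : 6 ≤ n) :
    kMetricDim (K1join (SimpleGraph.pathGraph n)) 2 = (n + 2) / 2 ∧
      kMetricDim (K1join (SimpleGraph.pathGraph n)) 3 = n - (n - 4) / 5 := by
  constructor
  · apply le_antisymm
    · exact Nat.sInf_le ⟨Stmt18.S2 n, Stmt18.gen_iff.mpr (Stmt18.gen2 hn), Stmt18.S2_card hn⟩
    · refine le_csInf ⟨(n+2)/2, Stmt18.S2 n, Stmt18.gen_iff.mpr (Stmt18.gen2 hn),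
        Stmt18.S2_card hn⟩ ?_
      rintro m ⟨S, hS, rfl⟩
      exact Stmt18.dim2_lower hn (Stmt18.gen_iff.mp hS)
  · apply le_antisymm
    · exact Nat.sInf_le ⟨Stmt18.S3 n, Stmt18.gen_iff.mpr (Stmt18.gen3 hn), Stmt18.S3_card hn⟩
    · refine le_csInf ⟨n - (n-4)/5, Stmt18.S3 n, Stmt18.gen_iff.mpr (Stmt18.gen3 hn),
        Stmt18.S3_card hn⟩ ?_
      rintro m ⟨S, hS, rfl⟩
      exact Stmt18.dim3_lower hn (Stmt18.gen_iff.mp hS)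
end

section
/- For any integer n ≥ 7, the wheel graph W_{1,n} = K_1 + C_n satisfies dim_2(W_{1,n}) = ⌈n/2⌉, dim_3(W_{1,n}) = n − ⌊n/5⌋, and dim_4(W_{1,n}) = n. -/
open SimpleGraph

open Finset
open Fin.NatCast Fin.CommRing
namespace S19
variable {m : ℕ}

/-- congruence mod N for args < 2N -/
def CE (N a b : ℕ) : Prop := a = b ∨ a + N = b ∨ b + N = a

def adjP (N a b : ℕ) : Prop := CE N a (b+1) ∨ CE N b (a+1)

def DisP (N a b c : ℕ) : Prop := CE N c a ∨ CE N c b ∨ ¬ (adjP N a c ↔ adjP N b c)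

lemma cast_eq_iff {a b : ℕ} (ha : a < 2*(m+2)) (hb : b < 2*(m+2)) :
    ((a : Fin (m+2)) = (b : Fin (m+2))) ↔ CE (m+2) a b := by
  rw [Fin.ext_iff, Fin.val_natCast, Fin.val_natCast]
  unfold CE
  rcases Nat.lt_or_ge a (m+2) with h | h <;> rcases Nat.lt_or_ge b (m+2) with h' | h'
  · rw [Nat.mod_eq_of_lt h, Nat.mod_eq_of_lt h']; omega
  · rw [Nat.mod_eq_of_lt h, Nat.mod_eq_sub_mod h', Nat.mod_eq_of_lt (by omega)]; omega
  · rw [Nat.mod_eq_of_lt h', Nat.mod_eq_sub_mod h, Nat.mod_eq_of_lt (by omega)]; omega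
  · rw [Nat.mod_eq_sub_mod h, Nat.mod_eq_sub_mod h', Nat.mod_eq_of_lt (by omega),
      Nat.mod_eq_of_lt (by omega)]; omega

lemma addcast_eq_iff (i : Fin (m+2)) {a b : ℕ} (ha : a < 2*(m+2)) (hb : b < 2*(m+2)) :
    (i + (a : Fin (m+2)) = i + (b : Fin (m+2))) ↔ CE (m+2) a b := by
  rw [add_right_inj, cast_eq_iff ha hb]

lemma cyc_adj_off (i : Fin (m+2)) {a b : ℕ} (ha : a ≤ m+2) (hb : b ≤ m+2) :
    (cycleGraph (m+2)).Adj (i + (a : Fin (m+2))) (i + (b : Fin (m+2))) ↔ adjP (m+2) a b := by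
  rw [cycleGraph_adj]
  have h1 : (i + (a : Fin (m+2))) - (i + (b : Fin (m+2))) = (a : Fin (m+2)) - b := by ring
  have h2 : (i + (b : Fin (m+2))) - (i + (a : Fin (m+2))) = (b : Fin (m+2)) - a := by ring
  rw [h1, h2, sub_eq_iff_eq_add, sub_eq_iff_eq_add]
  have e1 : (1 : Fin (m+2)) + (b : Fin (m+2)) = ((b+1 : ℕ) : Fin (m+2)) := by push_cast; ring
  have e2 : (1 : Fin (m+2)) + (a : Fin (m+2)) = ((a+1 : ℕ) : Fin (m+2)) := by push_cast; ring
  rw [e1, e2, cast_eq_iff (by omega) (by omega), cast_eq_iff (by omega) (by omega)]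
  unfold adjP; tauto

lemma exists_off (i a : Fin (m+2)) : ∃ c : ℕ, c < m + 2 ∧ a = i + (c : Fin (m+2)) :=
  ⟨(a - i).val, (a - i).isLt, by rw [Fin.cast_val_eq_self]; ring⟩

lemma val_add_off (i : Fin (m+2)) {c : ℕ} (hc : c ≤ m + 2) :
    ((i + (c : Fin (m+2))).val = i.val + c ∨ (i + (c : Fin (m+2))).val + (m+2) = i.val + c) := by
  have h := Fin.val_add (i) ((c : Fin (m+2)))
  rw [Fin.val_natCast] at h
  have hcc : c % (m + 2) = c ∨ (c = m + 2 ∧ c % (m+2) = 0) := by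
    rcases Nat.lt_or_ge c (m+2) with h' | h'
    · exact Or.inl (Nat.mod_eq_of_lt h')
    · right; constructor; omega; have : c = m + 2 := by omega
      simp [this]
  have hiv : i.val < m + 2 := i.isLt
  rcases hcc with h' | ⟨h1, h2⟩
  · rw [h'] at h
    rcases Nat.lt_or_ge (i.val + c) (m+2) with h'' | h''
    · left; rw [h, Nat.mod_eq_of_lt h'']
    · right; rw [h, Nat.mod_eq_sub_mod h'', Nat.mod_eq_of_lt (by omega)]; omega
  · rw [h2] at h; simp only [Nat.add_zero] at h; rw [Nat.mod_eq_of_lt hiv] at h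
    right; rw [h]; omega


section Graph
open scoped Classical
variable (m)
abbrev G : SimpleGraph (Option (Fin (m+2))) := K1join (cycleGraph (m+2))
variable {m}

lemma adj_none_some (j : Fin (m+2)) : (G m).Adj none (some j) := by
  rw [G, K1join, SimpleGraph.fromRel_adj]
  exact ⟨by simp, Or.inl trivial⟩

lemma adj_some_some (a b : Fin (m+2)) :
    (G m).Adj (some a) (some b) ↔ (cycleGraph (m+2)).Adj a b := by
  rw [G, K1join, SimpleGraph.fromRel_adj]
  constructor
  · rintro ⟨-, h | h⟩
    · exact h
    · exact h.symm
  · intro h; exact ⟨by simp [h.ne], Or.inl h⟩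

lemma dist_formula (u v : Option (Fin (m+2))) :
    (G m).dist u v = if u = v then 0 else if (G m).Adj u v then 1 else 2 := by
  split_ifs with h1 h2
  · rw [h1, SimpleGraph.dist_self]
  · rw [SimpleGraph.dist_eq_one_iff_adj]; exact h2
  · -- u ≠ v, not adjacent: both are some
    obtain ⟨a, ha⟩ : ∃ a, u = some a := by
      cases u with
      | none => cases v with
        | none => exact absurd rfl h1
        | some b => exact absurd (adj_none_some b) h2
      | some a => exact ⟨a, rfl⟩
    obtain ⟨b, hb⟩ : ∃ b, v = some b := by
      cases v with
      | none => cases u with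
        | none => exact absurd rfl h1
        | some a => exact absurd ((G m).adj_symm (adj_none_some a)) h2
      | some b => exact ⟨b, rfl⟩
    subst ha hb
    have h1' : (G m).Adj (some a) none := (G m).adj_symm (adj_none_some a)
    have h2' : (G m).Adj none (some b) := adj_none_some b
    have hle : (G m).dist (some a) (some b) ≤ 2 := by
      simpa using SimpleGraph.dist_le
        (SimpleGraph.Walk.cons h1' (SimpleGraph.Walk.cons h2' SimpleGraph.Walk.nil))
    have hpos : 0 < (G m).dist (some a) (some b) :=
      SimpleGraph.Reachable.pos_dist_of_ne
        ⟨SimpleGraph.Walk.cons h1' (SimpleGraph.Walk.cons h2' SimpleGraph.Walk.nil)⟩ h1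
    have hne1 : (G m).dist (some a) (some b) ≠ 1 := by
      rw [Ne, SimpleGraph.dist_eq_one_iff_adj]; exact h2
    omega

lemma dis_iff {u v : Option (Fin (m+2))} (w : Option (Fin (m+2))) (huv : u ≠ v) :
    ((G m).dist u w ≠ (G m).dist v w) ↔
      (w = u ∨ w = v ∨ ¬ ((G m).Adj u w ↔ (G m).Adj v w)) := by
  classical
  rcases eq_or_ne w u with rfl | h1
  · refine iff_of_true ?_ (Or.inl rfl)
    simp only [dist_formula]
    rw [if_pos trivial, if_neg (fun h : v = w => huv h.symm)]
    split_ifs <;> omega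
  · rcases eq_or_ne w v with rfl | h2
    · refine iff_of_true ?_ (Or.inr (Or.inl rfl))
      simp only [dist_formula]
      rw [if_pos trivial, if_neg (fun h : u = w => huv h)]
      split_ifs <;> omega
    · have du : (G m).dist u w = if (G m).Adj u w then 1 else 2 := by
        simp only [dist_formula]; rw [if_neg (fun h : u = w => h1 h.symm)]
      have dv : (G m).dist v w = if (G m).Adj v w then 1 else 2 := by
        simp only [dist_formula]; rw [if_neg (fun h : v = w => h2 h.symm)]
      rw [du, dv]
      constructor
      · intro h
        refine Or.inr (Or.inr fun hiff => ?_)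
        by_cases p : (G m).Adj u w
        · have q := hiff.mp p
          rw [if_pos p, if_pos q] at h; exact h rfl
        · have q : ¬ (G m).Adj v w := fun hq => p (hiff.mpr hq)
          rw [if_neg p, if_neg q] at h; exact h rfl
      · rintro (h | h | h)
        · exact absurd h h1
        · exact absurd h h2
        · by_cases p : (G m).Adj u w <;> by_cases q : (G m).Adj v w
          · exact absurd (iff_of_true p q) h
          · rw [if_pos p, if_neg q]; omega
          · rw [if_neg p, if_pos q]; omega
          · exact absurd (iff_of_false p q) h


lemma dis_some_iff (i : Fin (m+2)) {a b : ℕ} (c : ℕ) (ha : a < m+2) (hb : b < m+2)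
    (hc : c < m+2) (hab : ¬ CE (m+2) a b) :
    ((G m).dist (some (i + (a : Fin (m+2)))) (some (i + (c : Fin (m+2)))) ≠
      (G m).dist (some (i + (b : Fin (m+2)))) (some (i + (c : Fin (m+2))))) ↔
    DisP (m+2) a b c := by
  have huv : (some (i + (a : Fin (m+2))) : Option (Fin (m+2))) ≠ some (i + (b : Fin (m+2))) := by
    intro h
    exact hab ((addcast_eq_iff i (by omega) (by omega)).mp (Option.some.inj h))
  rw [dis_iff _ huv]
  have e1 : (some (i + (c : Fin (m+2))) : Option (Fin (m+2))) = some (i + (a : Fin (m+2)))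
      ↔ CE (m+2) c a := by
    rw [Option.some.injEq, addcast_eq_iff i (by omega) (by omega)]
  have e2 : (some (i + (c : Fin (m+2))) : Option (Fin (m+2))) = some (i + (b : Fin (m+2)))
      ↔ CE (m+2) c b := by
    rw [Option.some.injEq, addcast_eq_iff i (by omega) (by omega)]
  rw [e1, e2, adj_some_some, adj_some_some,
    cyc_adj_off i (by omega) (by omega), cyc_adj_off i (by omega) (by omega)]
  rfl

lemma dist_rim_none (a : Fin (m+2)) : (G m).dist (some a) none = 1 := by
  rw [SimpleGraph.dist_eq_one_iff_adj]; exact (G m).adj_symm (adj_none_some a)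

lemma dis_center {j x : Fin (m+2)} (h : x = j ∨ ¬ (cycleGraph (m+2)).Adj j x) :
    (G m).dist none (some x) ≠ (G m).dist (some j) (some x) := by
  have huv : (none : Option (Fin (m+2))) ≠ some j := by simp
  rw [dis_iff _ huv]
  rcases h with rfl | h
  · exact Or.inr (Or.inl rfl)
  · refine Or.inr (Or.inr fun hiff => ?_)
    exact h ((adj_some_some j x).mp (hiff.mp (adj_none_some x)))

end Graph

section Windows

/-- finite window from base `i` with given offsets -/
def Wn (i : Fin (m+2)) (offs : Finset ℕ) : Finset (Fin (m+2)) :=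
  offs.image (fun t : ℕ => i + (t : Fin (m+2)))

lemma Wn_card (i : Fin (m+2)) (offs : Finset ℕ) (h : ∀ t ∈ offs, t < m+2) :
    (Wn i offs).card = offs.card := by
  rw [Wn, Finset.card_image_of_injOn]
  intro t ht t' ht' heq
  simp only [Finset.mem_coe] at ht ht'
  have := (addcast_eq_iff i (by have := h t ht; omega) (by have := h t' ht'; omega)).mp heq
  have h1 := h t ht; have h2 := h t' ht'
  unfold CE at this; omega

end Windows

lemma counting (R : Finset (Fin (m+2))) (L k : ℕ) (hL : L ≤ m+2)
    (hb : ∀ i : Fin (m+2), k ≤ ((Wn i (Finset.range L)).filter (· ∈ R)).card) :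
    (m+2) * k ≤ L * R.card := by
  have key : ∀ i : Fin (m+2), ((Wn i (Finset.range L)).filter (· ∈ R)).card
      = ∑ t ∈ Finset.range L, (if i + (t : Fin (m+2)) ∈ R then 1 else 0) := by
    intro i
    rw [Wn, Finset.filter_image, Finset.card_image_of_injOn, Finset.card_filter]
    intro t ht t' ht' heq
    simp only [Finset.coe_filter, Set.mem_setOf_eq, Finset.mem_range] at ht ht'
    have := (addcast_eq_iff i (by omega) (by omega)).mp heq
    unfold CE at this; omega
  have swap : ∀ t : ℕ, (∑ i : Fin (m+2), if i + (t : Fin (m+2)) ∈ R then 1 else 0) = R.card := by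
    intro t
    rw [Fintype.sum_equiv (Equiv.addRight ((t : Fin (m+2))))
      (fun i => if i + (t : Fin (m+2)) ∈ R then 1 else 0)
      (fun i => if i ∈ R then 1 else 0) (fun i => rfl)]
    rw [← Finset.card_filter]
    congr 1
    ext x; simp
  have h1 : (m+2) * k ≤ ∑ i : Fin (m+2), ((Wn i (Finset.range L)).filter (· ∈ R)).card := by
    have := Finset.card_nsmul_le_sum Finset.univ
      (fun i : Fin (m+2) => ((Wn i (Finset.range L)).filter (· ∈ R)).card) k
      (fun i _ => hb i)
    simpa [mul_comm] using this
  refine h1.trans (le_of_eq ?_)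
  calc ∑ i : Fin (m+2), ((Wn i (Finset.range L)).filter (· ∈ R)).card
      = ∑ i : Fin (m+2), ∑ t ∈ Finset.range L, (if i + (t : Fin (m+2)) ∈ R then 1 else 0) := by
        exact Finset.sum_congr rfl (fun i _ => key i)
    _ = ∑ t ∈ Finset.range L, ∑ i : Fin (m+2), (if i + (t : Fin (m+2)) ∈ R then 1 else 0) :=
        Finset.sum_comm
    _ = ∑ t ∈ Finset.range L, R.card := Finset.sum_congr rfl (fun t _ => swap t)
    _ = L * R.card := by rw [Finset.sum_const, Finset.card_range, smul_eq_mul]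

section LB
variable (h7 : 7 ≤ m + 2)

lemma window_bound {k : ℕ} {S : Finset (Option (Fin (m+2)))} (hS : kMetricGen (G m) k ↑S)
    (i : Fin (m+2)) {a b : ℕ} (ha : a < m+2) (hb : b < m+2) (hab : ¬ CE (m+2) a b)
    (F : Finset (Fin (m+2)))
    (hF : ∀ c, c < m+2 → DisP (m+2) a b c → i + (c : Fin (m+2)) ∈ F) :
    k ≤ (F.filter (fun x => some x ∈ S)).card := by
  have hne : (some (i + (a : Fin (m+2))) : Option (Fin (m+2))) ≠ some (i + (b : Fin (m+2))) := by
    intro h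
    exact hab ((addcast_eq_iff i (by omega) (by omega)).mp (Option.some.inj h))
  obtain ⟨T, hTS, hTk, hTd⟩ := hS _ _ hne
  refine hTk.trans ?_
  have hsub : T ⊆ (F.filter (fun x => some x ∈ S)).image some := by
    intro w hw
    have hdis := hTd w hw
    cases w with
    | none =>
      rw [dist_rim_none, dist_rim_none] at hdis
      exact absurd rfl hdis
    | some x =>
      obtain ⟨c, hc, rfl⟩ := exists_off i x
      have hd : DisP (m+2) a b c := (dis_some_iff i c ha hb hc hab).mp hdis
      refine Finset.mem_image.mpr ⟨_, Finset.mem_filter.mpr ⟨hF c hc hd, ?_⟩, rfl⟩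
      exact hTS hw
  calc T.card ≤ ((F.filter (fun x => some x ∈ S)).image some).card := Finset.card_le_card hsub
    _ = (F.filter (fun x => some x ∈ S)).card :=
        Finset.card_image_of_injective _ (Option.some_injective _)

include h7

lemma lb_main {k : ℕ} {S : Finset (Option (Fin (m+2)))} (hS : kMetricGen (G m) k ↑S)
    (i : Fin (m+2)) : k ≤ ((Wn i (Finset.range 4)).filter (fun x => some x ∈ S)).card := by
  refine window_bound hS i (a := 1) (b := 2) (by omega) (by omega)
    (by unfold CE; omega) _ (fun c hc hd => ?_)
  have hc4 : c = 0 ∨ c = 1 ∨ c = 2 ∨ c = 3 := by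
    unfold DisP adjP CE at hd; omega
  exact Finset.mem_image.mpr ⟨c, Finset.mem_range.mpr (by omega), rfl⟩

lemma lb_main13 {S : Finset (Option (Fin (m+2)))} (hS : kMetricGen (G m) 3 ↑S)
    (i : Fin (m+2)) :
    3 ≤ ((Wn i ({0,1,3,4} : Finset ℕ)).filter (fun x => some x ∈ S)).card := by
  refine window_bound hS i (a := 1) (b := 3) (by omega) (by omega)
    (by unfold CE; omega) _ (fun c hc hd => ?_)
  have hc4 : c = 0 ∨ c = 1 ∨ c = 3 ∨ c = 4 := by
    unfold DisP adjP CE at hd; omega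
  refine Finset.mem_image.mpr ⟨c, by simp; omega, rfl⟩

lemma lb4 {S : Finset (Option (Fin (m+2)))} (hS : kMetricGen (G m) 4 ↑S) :
    m + 2 ≤ S.card := by
  have hall : ∀ j : Fin (m+2), some j ∈ S := by
    intro j
    by_contra hj
    have hb := lb_main h7 hS (j - 1)
    set F := Wn (j - 1) (Finset.range 4) with hF
    have hjF : j ∈ F := by
      refine Finset.mem_image.mpr ⟨1, by simp, ?_⟩
      rw [Nat.cast_one]; ring
    have hsub : F.filter (fun x => some x ∈ S) ⊆ F.erase j := by
      intro x hx
      rw [Finset.mem_filter] at hx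
      refine Finset.mem_erase.mpr ⟨?_, hx.1⟩
      rintro rfl; exact hj hx.2
    have hcard : (F.erase j).card ≤ 3 := by
      have h1 : F.card = 4 := by
        rw [hF, Wn_card]
        · simp
        · intro t ht; simp at ht; omega
      rw [Finset.card_erase_of_mem hjF, h1]
    have := (Finset.card_le_card hsub).trans hcard
    omega
  have hsub : (Finset.univ : Finset (Fin (m+2))).image some ⊆ S := by
    intro w hw
    obtain ⟨x, -, rfl⟩ := Finset.mem_image.mp hw
    exact hall x
  calc m + 2 = ((Finset.univ : Finset (Fin (m+2))).image some).card := by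
        rw [Finset.card_image_of_injective _ (Option.some_injective _), Finset.card_univ,
          Fintype.card_fin]
    _ ≤ S.card := Finset.card_le_card hsub

lemma lb2 {S : Finset (Option (Fin (m+2)))} (hS : kMetricGen (G m) 2 ↑S) :
    (m + 2 + 1) / 2 ≤ S.card := by
  set R := Finset.univ.filter (fun x : Fin (m+2) => some x ∈ S) with hR
  have hpt : ∀ i : Fin (m+2), 2 ≤ ((Wn i (Finset.range 4)).filter (· ∈ R)).card := by
    intro i
    have h1 := lb_main h7 hS i
    have : (Wn i (Finset.range 4)).filter (· ∈ R)
        = (Wn i (Finset.range 4)).filter (fun x => some x ∈ S) := by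
      apply Finset.filter_congr
      intro x hx
      simp [hR]
    rw [this]; exact h1
  have hc := counting R 4 2 (by omega) hpt
  have hRS : R.card ≤ S.card := by
    calc R.card = (R.image some).card :=
          (Finset.card_image_of_injective _ (Option.some_injective _)).symm
      _ ≤ S.card := by
          apply Finset.card_le_card
          intro w hw
          obtain ⟨x, hx, rfl⟩ := Finset.mem_image.mp hw
          rw [hR, Finset.mem_filter] at hx
          exact hx.2
  omega

lemma lb3 {S : Finset (Option (Fin (m+2)))} (hS : kMetricGen (G m) 3 ↑S) :
    (m + 2) - (m + 2) / 5 ≤ S.card := by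
  set R := Finset.univ.filter (fun x : Fin (m+2) => some x ∈ S) with hR
  -- gap property
  have gap : ∀ (x : Fin (m+2)) (s : ℕ), 1 ≤ s → s ≤ 4 → some x ∉ S →
      some (x + (s : Fin (m+2))) ∉ S → False := by
    intro x s hs1 hs4 hx hxs
    have hne : x ≠ x + (s : Fin (m+2)) := by
      intro h
      have : (0 : Fin (m+2)) = (s : Fin (m+2)) := by
        have := left_eq_add.mp h
        rw [this]
      rw [show (0 : Fin (m+2)) = ((0 : ℕ) : Fin (m+2)) by simp] at this
      have := (cast_eq_iff (by omega) (by omega)).mp this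
      unfold CE at this; omega
    -- choose base, window, and offsets
    obtain ⟨i, F, hFb, hxF, hxsF, hFcard⟩ :
        ∃ (i : Fin (m+2)) (F : Finset (Fin (m+2))),
          (3 ≤ (F.filter (fun y => some y ∈ S)).card) ∧ x ∈ F ∧
            (x + (s : Fin (m+2))) ∈ F ∧ F.card ≤ 4 := by
      rcases (by omega : s = 1 ∨ s = 2 ∨ s = 3 ∨ s = 4) with rfl | rfl | rfl | rfl
      · refine ⟨x - 1, Wn (x-1) (Finset.range 4), lb_main h7 hS _, ?_, ?_, ?_⟩
        · exact Finset.mem_image.mpr ⟨1, by simp, by rw [Nat.cast_one]; ring⟩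
        · exact Finset.mem_image.mpr ⟨2, by simp, by
            rw [show ((2:ℕ) : Fin (m+2)) = 1 + ((1:ℕ) : Fin (m+2)) by push_cast; ring]
            rw [Nat.cast_one]; ring⟩
        · rw [Wn]; exact (Finset.card_image_le).trans (by simp)
      · refine ⟨x - 1, Wn (x-1) (Finset.range 4), lb_main h7 hS _, ?_, ?_, ?_⟩
        · exact Finset.mem_image.mpr ⟨1, by simp, by rw [Nat.cast_one]; ring⟩
        · exact Finset.mem_image.mpr ⟨3, by simp, by
            rw [show ((3:ℕ) : Fin (m+2)) = 1 + ((2:ℕ) : Fin (m+2)) by push_cast; ring]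
            ring⟩
        · rw [Wn]; exact (Finset.card_image_le).trans (by simp)
      · refine ⟨x, Wn x (Finset.range 4), lb_main h7 hS _, ?_, ?_, ?_⟩
        · exact Finset.mem_image.mpr ⟨0, by simp, by simp⟩
        · exact Finset.mem_image.mpr ⟨3, by simp, rfl⟩
        · rw [Wn]; exact (Finset.card_image_le).trans (by simp)
      · refine ⟨x, Wn x ({0,1,3,4} : Finset ℕ), lb_main13 h7 hS _, ?_, ?_, ?_⟩
        · exact Finset.mem_image.mpr ⟨0, by simp, by simp⟩
        · exact Finset.mem_image.mpr ⟨4, by simp, rfl⟩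
        · rw [Wn]; exact (Finset.card_image_le).trans (by simp)
    have hsub : F.filter (fun y => some y ∈ S) ⊆ (F.erase x).erase (x + (s : Fin (m+2))) := by
      intro y hy
      rw [Finset.mem_filter] at hy
      refine Finset.mem_erase.mpr ⟨?_, Finset.mem_erase.mpr ⟨?_, hy.1⟩⟩
      · rintro rfl; exact hxs hy.2
      · rintro rfl; exact hx hy.2
    have hcard : ((F.erase x).erase (x + (s : Fin (m+2)))).card ≤ 2 := by
      have h1 : (F.erase x).card ≤ 3 := by
        rw [Finset.card_erase_of_mem hxF]; omega
      have h2 : (x + (s : Fin (m+2))) ∈ F.erase x := Finset.mem_erase.mpr ⟨fun h => hne h.symm, hxsF⟩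
      rw [Finset.card_erase_of_mem h2]; omega
    have := (Finset.card_le_card hsub).trans hcard
    omega
  have hpt : ∀ i : Fin (m+2), 4 ≤ ((Wn i (Finset.range 5)).filter (· ∈ R)).card := by
    intro i
    have hW5 : (Wn i (Finset.range 5)).card = 5 := by
      rw [Wn_card]
      · simp
      · intro t ht; simp at ht; omega
    have hmiss : ((Wn i (Finset.range 5)).filter (fun y => y ∉ R)).card ≤ 1 := by
      rw [Finset.card_le_one]
      intro y hy z hz
      rw [Finset.mem_filter] at hy hz
      obtain ⟨t, ht, rfl⟩ := Finset.mem_image.mp hy.1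
      obtain ⟨t', ht', rfl⟩ := Finset.mem_image.mp hz.1
      simp only [Finset.mem_range] at ht ht'
      have hyS : some (i + (t : Fin (m+2))) ∉ S := by
        intro h; exact hy.2 (Finset.mem_filter.mpr ⟨Finset.mem_univ _, h⟩)
      have hzS : some (i + (t' : Fin (m+2))) ∉ S := by
        intro h; exact hz.2 (Finset.mem_filter.mpr ⟨Finset.mem_univ _, h⟩)
      rcases Nat.lt_trichotomy t t' with hlt | heq | hlt
      · exfalso
        refine gap (i + (t : Fin (m+2))) (t' - t) (by omega) (by omega) hyS ?_
        rw [show i + (t' : Fin (m+2)) = i + (t : Fin (m+2)) + ((t' - t : ℕ) : Fin (m+2)) by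
          rw [add_assoc, ← Nat.cast_add]; congr 2; omega] at hzS
        exact hzS
      · rw [heq]
      · exfalso
        refine gap (i + (t' : Fin (m+2))) (t - t') (by omega) (by omega) hzS ?_
        rw [show i + (t : Fin (m+2)) = i + (t' : Fin (m+2)) + ((t - t' : ℕ) : Fin (m+2)) by
          rw [add_assoc, ← Nat.cast_add]; congr 2; omega] at hyS
        exact hyS
    have hsplit := Finset.card_filter_add_card_filter_not
      (s := Wn i (Finset.range 5)) (p := (· ∈ R))
    rw [hW5] at hsplit
    omega
  have hc := counting R 5 4 (by omega) hpt
  have hRS : R.card ≤ S.card := by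
    calc R.card = (R.image some).card :=
          (Finset.card_image_of_injective _ (Option.some_injective _)).symm
      _ ≤ S.card := by
          apply Finset.card_le_card
          intro w hw
          obtain ⟨x, hx, rfl⟩ := Finset.mem_image.mp hw
          rw [hR, Finset.mem_filter] at hx
          exact hx.2
  omega

end LB
section UB
variable (h7 : 7 ≤ m + 2)

lemma mem_imageS {A : Finset (Fin (m+2))} {x : Fin (m+2)} :
    some x ∈ A.image some ↔ x ∈ A := by
  simp

lemma exists_T (S : Finset (Option (Fin (m+2)))) (u v : Option (Fin (m+2)))
    (W : Finset (Fin (m+2)))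
    (hW : ∀ x ∈ W, (G m).dist u (some x) ≠ (G m).dist v (some x))
    (k : ℕ) (hk : k ≤ (W.filter (fun x => some x ∈ S)).card) :
    ∃ T : Finset (Option (Fin (m+2))), ↑T ⊆ (↑S : Set (Option (Fin (m+2)))) ∧ k ≤ T.card ∧
      ∀ w ∈ T, (G m).dist u w ≠ (G m).dist v w := by
  refine ⟨(W.filter (fun x => some x ∈ S)).image some, ?_, ?_, ?_⟩
  · intro w hw
    simp only [Finset.coe_image, Set.mem_image, Finset.mem_coe, Finset.mem_filter] at hw
    obtain ⟨x, ⟨-, hxS⟩, rfl⟩ := hw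
    exact hxS
  · rw [Finset.card_image_of_injective _ (Option.some_injective _)]; exact hk
  · intro w hw
    obtain ⟨x, hx, rfl⟩ := Finset.mem_image.mp hw
    exact hW x (Finset.mem_filter.mp hx).1

include h7

lemma dis_of_offset (i : Fin (m+2)) {a b : ℕ} (c : ℕ) (ha : a < m+2) (hb : b < m+2)
    (hc : c < m+2) (hab : ¬ CE (m+2) a b) (h : DisP (m+2) a b c) :
    (G m).dist (some (i + (a : Fin (m+2)))) (some (i + (c : Fin (m+2)))) ≠
      (G m).dist (some (i + (b : Fin (m+2)))) (some (i + (c : Fin (m+2)))) :=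
  (dis_some_iff i c ha hb hc hab).mpr h

/-- distinguishers for the pair (none, some j) -/
lemma none_case (A : Finset (Fin (m+2))) (k : ℕ) (hcard : k + 2 ≤ A.card) (j : Fin (m+2)) :
    ∃ T : Finset (Option (Fin (m+2))),
      ↑T ⊆ (↑(A.image some) : Set (Option (Fin (m+2)))) ∧ k ≤ T.card ∧
      ∀ w ∈ T, (G m).dist none w ≠ (G m).dist (some j) w := by
  set W := (A.erase (j + ((1:ℕ) : Fin (m+2)))).erase (j + ((m+1:ℕ) : Fin (m+2))) with hWdef
  have hWA : W ⊆ A := (Finset.erase_subset _ _).trans (Finset.erase_subset _ _)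
  refine exists_T (A.image some) none (some j) W ?_ k ?_
  · intro x hx
    obtain ⟨c, hc, rfl⟩ := exists_off j x
    rw [hWdef, Finset.mem_erase, Finset.mem_erase] at hx
    obtain ⟨hne1, hne2, -⟩ := hx
    rcases eq_or_ne c 0 with rfl | hc0
    · apply dis_center
      left
      simp
    · apply dis_center
      right
      intro hadj
      have hoff : (cycleGraph (m+2)).Adj (j + ((0:ℕ) : Fin (m+2))) (j + (c : Fin (m+2)))
          ↔ adjP (m+2) 0 c := cyc_adj_off j (by omega) (by omega)
      simp only [Nat.cast_zero, add_zero] at hoff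
      have hadj' := hoff.mp hadj
      have hc1 : ¬ CE (m+2) c 1 := fun hce => hne2 ((addcast_eq_iff j (by omega) (by omega)).mpr hce)
      have hcm : ¬ CE (m+2) c (m+1) :=
        fun hce => hne1 ((addcast_eq_iff j (by omega) (by omega)).mpr hce)
      unfold adjP CE at hadj' hc1 hcm; omega
  · have hfil : W.filter (fun x => some x ∈ A.image some) = W := by
      apply Finset.filter_true_of_mem
      intro x hx
      exact mem_imageS.mpr (hWA hx)
    rw [hfil, hWdef]
    have e1 := Finset.pred_card_le_card_erase (s := A) (a := j + ((1:ℕ) : Fin (m+2)))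
    have e2 := Finset.pred_card_le_card_erase (s := A.erase (j + ((1:ℕ) : Fin (m+2))))
      (a := j + ((m+1:ℕ) : Fin (m+2)))
    omega

/-- parity pick -/
lemma pick_even (i : Fin (m+2)) (c : ℕ) (hc : c + 1 ≤ m+2) :
    ∃ e : Fin (m+2), (e = i + (c : Fin (m+2)) ∨ e = i + ((c+1 : ℕ) : Fin (m+2))) ∧
      e.val % 2 = 0 := by
  have v1 := val_add_off i (show c ≤ m+2 by omega)
  have v2 := val_add_off i (show c+1 ≤ m+2 by omega)
  by_cases h : (i + (c : Fin (m+2))).val % 2 = 0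
  · exact ⟨_, Or.inl rfl, h⟩
  · refine ⟨_, Or.inr rfl, ?_⟩
    have hi : i.val < m+2 := i.isLt
    have b1 : (i + (c : Fin (m+2))).val < m+2 := Fin.is_lt _
    have b2 : (i + ((c+1:ℕ) : Fin (m+2))).val < m+2 := Fin.is_lt _
    have hi2 : i.val < m+2 := i.isLt
    generalize hg1 : (i + (c : Fin (m+2))).val = x1 at v1 h b1
    generalize hg2 : (i + ((c+1:ℕ) : Fin (m+2))).val = x2 at v2 b2 ⊢
    omega

omit h7 in
lemma filter_someS (A W : Finset (Fin (m+2))) (hWA : W ⊆ A) :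
    W.filter (fun x => some x ∈ A.image some) = W := by
  apply Finset.filter_true_of_mem
  intro x hx
  exact mem_imageS.mpr (hWA hx)

lemma core_T (A : Finset (Fin (m+2))) (p : Fin (m+2)) (c k : ℕ)
    (h1 : 1 ≤ c) (h2 : 2*c ≤ m+2) (offs : Finset ℕ)
    (hoff : ∀ t ∈ offs, t < m+2 ∧ DisP (m+2) 1 (1+c) t)
    (hk : k ≤ ((Wn p offs).filter (· ∈ A)).card) :
    ∃ T : Finset (Option (Fin (m+2))),
      ↑T ⊆ (↑(A.image some) : Set (Option (Fin (m+2)))) ∧ k ≤ T.card ∧ ∀ w ∈ T,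
      (G m).dist (some (p + ((1:ℕ) : Fin (m+2)))) w ≠
        (G m).dist (some (p + ((1+c : ℕ) : Fin (m+2)))) w := by
  refine exists_T _ _ _ ((Wn p offs).filter (· ∈ A)) ?_ k ?_
  · intro x hx
    have hx' := (Finset.mem_filter.mp hx).1
    obtain ⟨t, ht, rfl⟩ := Finset.mem_image.mp hx'
    exact dis_of_offset h7 p t (by omega) (by omega) (hoff t ht).1
      (by unfold CE; omega) (hoff t ht).2
  · rwa [filter_someS A _ (fun x hx => (Finset.mem_filter.mp hx).2)]

omit h7 in
/-- generic: at most one missing element in any short window -/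
lemma miss_le_one (A : Finset (Fin (m+2)))
    (gapA : ∀ (x : Fin (m+2)) (s : ℕ), 1 ≤ s → s ≤ 4 → x ∉ A →
      x + (s : Fin (m+2)) ∉ A → False)
    (p : Fin (m+2)) (offs : Finset ℕ)
    (hspan : ∀ t ∈ offs, ∀ t' ∈ offs, t ≤ t' → t' - t ≤ 4) :
    ((Wn p offs).filter (· ∉ A)).card ≤ 1 := by
  rw [Finset.card_le_one]
  intro y hy z hz
  rw [Finset.mem_filter] at hy hz
  obtain ⟨t, ht, rfl⟩ := Finset.mem_image.mp hy.1
  obtain ⟨t', ht', rfl⟩ := Finset.mem_image.mp hz.1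
  rcases Nat.lt_trichotomy t t' with hlt | heq | hlt
  · exfalso
    refine gapA (p + (t : Fin (m+2))) (t' - t) (by omega) ?_ hy.2 ?_
    · exact (hspan t ht t' ht' (by omega))
    · rw [show p + (t' : Fin (m+2)) = p + (t : Fin (m+2)) + ((t' - t : ℕ) : Fin (m+2)) by
        rw [add_assoc, ← Nat.cast_add]; congr 2; omega] at hz
      exact hz.2
  · rw [heq]
  · exfalso
    refine gapA (p + (t' : Fin (m+2))) (t - t') (by omega) ?_ hz.2 ?_
    · exact (hspan t' ht' t ht (by omega))
    · rw [show p + (t : Fin (m+2)) = p + (t' : Fin (m+2)) + ((t - t' : ℕ) : Fin (m+2)) by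
        rw [add_assoc, ← Nat.cast_add]; congr 2; omega] at hy
      exact hy.2

omit h7 in
lemma present_ge (A : Finset (Fin (m+2))) (W : Finset (Fin (m+2)))
    (hmiss : (W.filter (· ∉ A)).card ≤ 1) :
    W.card - 1 ≤ (W.filter (· ∈ A)).card := by
  have := Finset.card_filter_add_card_filter_not (s := W) (p := (· ∈ A))
  omega

/-- core for level 4 -/
lemma core4 (p : Fin (m+2)) (c : ℕ) (h1 : 1 ≤ c) (h2 : 2*c ≤ m+2) :
    ∃ T : Finset (Option (Fin (m+2))),
      ↑T ⊆ (↑((Finset.univ : Finset (Fin (m+2))).image some) :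
        Set (Option (Fin (m+2)))) ∧ 4 ≤ T.card ∧ ∀ w ∈ T,
      (G m).dist (some (p + ((1:ℕ) : Fin (m+2)))) w ≠
        (G m).dist (some (p + ((1+c : ℕ) : Fin (m+2)))) w := by
  have hfu : ∀ (W : Finset (Fin (m+2))), W.filter (· ∈ (Finset.univ : Finset (Fin (m+2)))) = W :=
    fun W => Finset.filter_true_of_mem (fun x _ => Finset.mem_univ x)
  rcases (by omega : c = 1 ∨ c = 2 ∨ 3 ≤ c) with rfl | rfl | hc3
  · refine core_T h7 _ p 1 4 (by omega) (by omega) ({0,1,2,3} : Finset ℕ) ?_ ?_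
    · intro t ht
      simp only [Finset.mem_insert, Finset.mem_singleton] at ht
      constructor
      · omega
      · unfold DisP adjP CE
        rcases ht with rfl | rfl | rfl | rfl <;> omega
    · rw [hfu, Wn_card]
      · rfl
      · intro t ht; simp at ht; omega
  · refine core_T h7 _ p 2 4 (by omega) (by omega) ({0,1,3,4} : Finset ℕ) ?_ ?_
    · intro t ht
      simp only [Finset.mem_insert, Finset.mem_singleton] at ht
      constructor
      · omega
      · unfold DisP adjP CE
        rcases ht with rfl | rfl | rfl | rfl <;> omega
    · rw [hfu, Wn_card]
      · rfl
      · intro t ht; simp at ht; omega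
  · refine core_T h7 _ p c 4 (by omega) (by omega) ({1,2,1+c,2+c} : Finset ℕ) ?_ ?_
    · intro t ht
      simp only [Finset.mem_insert, Finset.mem_singleton] at ht
      constructor
      · omega
      · unfold DisP adjP CE
        rcases ht with rfl | rfl | rfl | rfl <;> omega
    · rw [hfu, Wn_card]
      · rw [Finset.card_insert_of_notMem (by first | (simp; omega) | simp),
          Finset.card_insert_of_notMem (by first | (simp; omega) | simp),
          Finset.card_insert_of_notMem (by first | (simp; omega) | simp), Finset.card_singleton]
      · intro t ht; simp at ht; omega

/-- core for level 3 -/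
lemma core3 (A : Finset (Fin (m+2)))
    (gapA : ∀ (x : Fin (m+2)) (s : ℕ), 1 ≤ s → s ≤ 4 → x ∉ A →
      x + (s : Fin (m+2)) ∉ A → False)
    (p : Fin (m+2)) (c : ℕ) (h1 : 1 ≤ c) (h2 : 2*c ≤ m+2) :
    ∃ T : Finset (Option (Fin (m+2))),
      ↑T ⊆ (↑(A.image some) : Set (Option (Fin (m+2)))) ∧ 3 ≤ T.card ∧ ∀ w ∈ T,
      (G m).dist (some (p + ((1:ℕ) : Fin (m+2)))) w ≠
        (G m).dist (some (p + ((1+c : ℕ) : Fin (m+2)))) w := by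
  rcases (by omega : c = 1 ∨ c = 2 ∨ 3 ≤ c) with rfl | rfl | hc3
  · refine core_T h7 _ p 1 3 (by omega) (by omega) ({0,1,2,3} : Finset ℕ) ?_ ?_
    · intro t ht
      simp only [Finset.mem_insert, Finset.mem_singleton] at ht
      refine ⟨by omega, ?_⟩
      unfold DisP adjP CE
      rcases ht with rfl | rfl | rfl | rfl <;> omega
    · have hm := miss_le_one A gapA p ({0,1,2,3} : Finset ℕ) (by intro t ht t' ht'; simp at ht ht'; omega)
      have hp := present_ge A _ hm
      have hcW : (Wn p ({0,1,2,3} : Finset ℕ)).card = 4 := by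
        rw [Wn_card]
        · rfl
        · intro t ht; simp at ht; omega
      omega
  · refine core_T h7 _ p 2 3 (by omega) (by omega) ({0,1,3,4} : Finset ℕ) ?_ ?_
    · intro t ht
      simp only [Finset.mem_insert, Finset.mem_singleton] at ht
      refine ⟨by omega, ?_⟩
      unfold DisP adjP CE
      rcases ht with rfl | rfl | rfl | rfl <;> omega
    · have hm := miss_le_one A gapA p ({0,1,3,4} : Finset ℕ) (by intro t ht t' ht'; simp at ht ht'; omega)
      have hp := present_ge A _ hm
      have hcW : (Wn p ({0,1,3,4} : Finset ℕ)).card = 4 := by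
        rw [Wn_card]
        · rfl
        · intro t ht; simp at ht; omega
      omega
  · refine core_T h7 _ p c 3 (by omega) (by omega)
      (({0,1,2} : Finset ℕ) ∪ ({c,1+c,2+c} : Finset ℕ)) ?_ ?_
    · intro t ht
      simp only [Finset.mem_union, Finset.mem_insert, Finset.mem_singleton] at ht
      refine ⟨by omega, ?_⟩
      unfold DisP adjP CE
      rcases ht with (rfl | rfl | rfl) | (rfl | rfl | rfl) <;> omega
    · have hWu : Wn p (({0,1,2} : Finset ℕ) ∪ ({c,1+c,2+c} : Finset ℕ))
          = Wn p ({0,1,2} : Finset ℕ) ∪ Wn p ({c,1+c,2+c} : Finset ℕ) := by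
        rw [Wn, Wn, Wn, Finset.image_union]
      have hm1 := miss_le_one A gapA p ({0,1,2} : Finset ℕ)
        (by intro t ht t' ht'; simp at ht ht'; omega)
      have hm2 := miss_le_one A gapA p ({c,1+c,2+c} : Finset ℕ)
        (by intro t ht t' ht'; simp at ht ht'; omega)
      have hmu : ((Wn p (({0,1,2} : Finset ℕ) ∪ ({c,1+c,2+c} : Finset ℕ))).filter (· ∉ A)).card ≤ 2 := by
        rw [hWu, Finset.filter_union]
        calc ((Wn p ({0,1,2} : Finset ℕ)).filter (· ∉ A) ∪
            (Wn p ({c,1+c,2+c} : Finset ℕ)).filter (· ∉ A)).card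
            ≤ ((Wn p ({0,1,2} : Finset ℕ)).filter (· ∉ A)).card +
              ((Wn p ({c,1+c,2+c} : Finset ℕ)).filter (· ∉ A)).card := Finset.card_union_le _ _
          _ ≤ 2 := by omega
      have hcW : (Wn p (({0,1,2} : Finset ℕ) ∪ ({c,1+c,2+c} : Finset ℕ))).card = 6 := by
        rw [Wn_card]
        · rw [show (({0,1,2} : Finset ℕ) ∪ ({c,1+c,2+c} : Finset ℕ)) = {0,1,2,c,1+c,2+c} by
            ext t; simp; omega]
          rw [Finset.card_insert_of_notMem (by first | (simp; omega) | simp),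
            Finset.card_insert_of_notMem (by first | (simp; omega) | simp),
            Finset.card_insert_of_notMem (by first | (simp; omega) | simp),
            Finset.card_insert_of_notMem (by first | (simp; omega) | simp),
            Finset.card_insert_of_notMem (by first | (simp; omega) | simp), Finset.card_singleton]
        · intro t ht; simp at ht; omega
      have := Finset.card_filter_add_card_filter_not
        (s := Wn p (({0,1,2} : Finset ℕ) ∪ ({c,1+c,2+c} : Finset ℕ))) (p := (· ∈ A))
      omega

omit h7 in
lemma ne_off (p : Fin (m+2)) {t t' : ℕ} (ht : t < 2*(m+2)) (ht' : t' < 2*(m+2))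
    (h : ¬ CE (m+2) t t') : p + (t : Fin (m+2)) ≠ p + (t' : Fin (m+2)) :=
  fun he => h ((addcast_eq_iff p ht ht').mp he)

end UB

/-- even rim vertices -/
def A2 (m : ℕ) : Finset (Fin (m+2)) :=
  Finset.univ.filter (fun x : Fin (m+2) => x.val % 2 = 0)

/-- rim vertices except multiples of 5 below `5 ⌊n/5⌋` -/
def A3 (m : ℕ) : Finset (Fin (m+2)) :=
  Finset.univ.filter (fun x : Fin (m+2) => ¬(x.val % 5 = 0 ∧ x.val < 5*((m+2)/5)))

section UB2
variable (h7 : 7 ≤ m + 2)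

lemma mem_A2 {x : Fin (m+2)} (h : x.val % 2 = 0) : x ∈ A2 m :=
  Finset.mem_filter.mpr ⟨Finset.mem_univ _, h⟩

include h7

lemma core2_of (p : Fin (m+2)) (c d₁ d₂ : ℕ) (h1 : 1 ≤ c) (h2 : 2*c ≤ m+2)
    (hd1 : d₁ + 1 < m+2) (hd2 : d₂ + 1 < m+2)
    (hsep : ∀ t t', (t = d₁ ∨ t = d₁+1) → (t' = d₂ ∨ t' = d₂+1) → ¬ CE (m+2) t t')
    (hdis : ∀ t, (t = d₁ ∨ t = d₁ + 1 ∨ t = d₂ ∨ t = d₂+1) → DisP (m+2) 1 (1+c) t) :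
    ∃ T : Finset (Option (Fin (m+2))),
      ↑T ⊆ (↑((A2 m).image some) : Set (Option (Fin (m+2)))) ∧ 2 ≤ T.card ∧ ∀ w ∈ T,
      (G m).dist (some (p + ((1:ℕ) : Fin (m+2)))) w ≠
        (G m).dist (some (p + ((1+c : ℕ) : Fin (m+2)))) w := by
  obtain ⟨e₁, he₁, hp₁⟩ := pick_even h7 p d₁ (by omega)
  obtain ⟨e₂, he₂, hp₂⟩ := pick_even h7 p d₂ (by omega)
  have hne : e₁ ≠ e₂ := by
    rcases he₁ with rfl | rfl <;> rcases he₂ with rfl | rfl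
    · exact ne_off p (by omega) (by omega) (hsep d₁ d₂ (Or.inl rfl) (Or.inl rfl))
    · exact ne_off p (by omega) (by omega) (hsep d₁ (d₂+1) (Or.inl rfl) (Or.inr rfl))
    · exact ne_off p (by omega) (by omega) (hsep (d₁+1) d₂ (Or.inr rfl) (Or.inl rfl))
    · exact ne_off p (by omega) (by omega) (hsep (d₁+1) (d₂+1) (Or.inr rfl) (Or.inr rfl))
  refine exists_T _ _ _ ({e₁, e₂} : Finset (Fin (m+2))) ?_ 2 ?_
  · intro x hx
    have hx' : x = e₁ ∨ x = e₂ := by simpa using hx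
    rcases hx' with rfl | rfl
    · rcases he₁ with rfl | rfl
      · exact dis_of_offset h7 p d₁ (by omega) (by omega) (by omega)
          (by unfold CE; omega) (hdis d₁ (by omega))
      · exact dis_of_offset h7 p (d₁+1) (by omega) (by omega) (by omega)
          (by unfold CE; omega) (hdis (d₁+1) (by omega))
    · rcases he₂ with rfl | rfl
      · exact dis_of_offset h7 p d₂ (by omega) (by omega) (by omega)
          (by unfold CE; omega) (hdis d₂ (by omega))
      · exact dis_of_offset h7 p (d₂+1) (by omega) (by omega) (by omega)
          (by unfold CE; omega) (hdis (d₂+1) (by omega))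
  · have hsubA : ({e₁, e₂} : Finset (Fin (m+2))) ⊆ A2 m := by
      intro x hx
      have hx' : x = e₁ ∨ x = e₂ := by simpa using hx
      rcases hx' with rfl | rfl
      · exact mem_A2 hp₁
      · exact mem_A2 hp₂
    rw [filter_someS _ _ hsubA, Finset.card_pair hne]

lemma core2 (p : Fin (m+2)) (c : ℕ) (h1 : 1 ≤ c) (h2 : 2*c ≤ m+2) :
    ∃ T : Finset (Option (Fin (m+2))),
      ↑T ⊆ (↑((A2 m).image some) : Set (Option (Fin (m+2)))) ∧ 2 ≤ T.card ∧ ∀ w ∈ T,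
      (G m).dist (some (p + ((1:ℕ) : Fin (m+2)))) w ≠
        (G m).dist (some (p + ((1+c : ℕ) : Fin (m+2)))) w := by
  rcases (by omega : c = 1 ∨ c = 2 ∨ 3 ≤ c) with rfl | rfl | hc3
  · refine core2_of h7 p 1 0 2 (by omega) (by omega) (by omega) (by omega) ?_ ?_
    · intro t t' ht ht'; unfold CE; omega
    · intro t ht; unfold DisP adjP CE; omega
  · refine core2_of h7 p 2 0 3 (by omega) (by omega) (by omega) (by omega) ?_ ?_
    · intro t t' ht ht'; unfold CE; omega
    · intro t ht; unfold DisP adjP CE; omega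
  · refine core2_of h7 p c 1 (1+c) (by omega) (by omega) (by omega) (by omega) ?_ ?_
    · intro t t' ht ht'; unfold CE; omega
    · intro t ht; unfold DisP adjP CE; omega

/-- gap property for A3 -/
lemma gapA3 : ∀ (x : Fin (m+2)) (s : ℕ), 1 ≤ s → s ≤ 4 → x ∉ A3 m →
    x + (s : Fin (m+2)) ∉ A3 m → False := by
  intro x s hs1 hs4 hx hxs
  rw [A3, Finset.mem_filter, not_and, not_not] at hx hxs
  have h1 := hx (Finset.mem_univ _)
  have h2 := hxs (Finset.mem_univ _)
  have hv := val_add_off x (show s ≤ m+2 by omega)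
  have hb1 : x.val < m+2 := x.isLt
  have hb2 : (x + (s : Fin (m+2))).val < m+2 := Fin.is_lt _
  generalize hg1 : x.val = v1 at h1 hv hb1
  generalize hg2 : (x + (s : Fin (m+2))).val = v2 at h2 hv hb2
  omega

lemma rim_wrapper {S : Finset (Option (Fin (m+2)))} {k : ℕ}
    (hcore : ∀ (p : Fin (m+2)) (c : ℕ), 1 ≤ c → 2*c ≤ m+2 →
      ∃ T : Finset (Option (Fin (m+2))), ↑T ⊆ (↑S : Set (Option (Fin (m+2)))) ∧ k ≤ T.card ∧
        ∀ w ∈ T, (G m).dist (some (p + ((1:ℕ) : Fin (m+2)))) w ≠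
          (G m).dist (some (p + ((1+c : ℕ) : Fin (m+2)))) w)
    (x y : Fin (m+2)) (hxy : x ≠ y) :
    ∃ T : Finset (Option (Fin (m+2))), ↑T ⊆ (↑S : Set (Option (Fin (m+2)))) ∧ k ≤ T.card ∧
      ∀ w ∈ T, (G m).dist (some x) w ≠ (G m).dist (some y) w := by
  have key : ∀ (x' : Fin (m+2)) (c : ℕ), 1 ≤ c → 2*c ≤ m+2 →
      ∃ T : Finset (Option (Fin (m+2))), ↑T ⊆ (↑S : Set (Option (Fin (m+2)))) ∧ k ≤ T.card ∧
        ∀ w ∈ T, (G m).dist (some x') w ≠ (G m).dist (some (x' + (c : Fin (m+2)))) w := by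
    intro x' c hc1 hc2
    obtain ⟨T, ht1, ht2, ht3⟩ := hcore (x' + ((m+1:ℕ) : Fin (m+2))) c hc1 hc2
    refine ⟨T, ht1, ht2, ?_⟩
    have z1 : ((m + 1 + 1 : ℕ) : Fin (m+2)) = 0 := Fin.natCast_self (m+2)
    have z2 : ((m + 1 + (1 + c) : ℕ) : Fin (m+2)) = (c : Fin (m+2)) := by
      apply Fin.ext
      rw [Fin.val_natCast, Fin.val_natCast]
      have hz : m + 1 + (1 + c) = (m + 2) + c := by omega
      rw [hz, Nat.add_mod_left]
    have e1 : x' + ((m+1:ℕ) : Fin (m+2)) + ((1:ℕ) : Fin (m+2)) = x' := by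
      rw [add_assoc, ← Nat.cast_add, z1, add_zero]
    have e2 : x' + ((m+1:ℕ) : Fin (m+2)) + ((1+c : ℕ) : Fin (m+2)) = x' + (c : Fin (m+2)) := by
      rw [add_assoc, ← Nat.cast_add, z2]
    rw [e1, e2] at ht3
    exact ht3
  set c0 := (y - x).val with hc0
  have hy : y = x + (c0 : Fin (m+2)) := by rw [hc0, Fin.cast_val_eq_self]; ring
  have hc0lt : c0 < m+2 := (y - x).isLt
  have hc0pos : 1 ≤ c0 := by
    rcases Nat.eq_zero_or_pos c0 with h | h
    · exfalso; apply hxy; rw [hy, h]; simp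
    · exact h
  rcases le_or_gt (2*c0) (m+2) with h | h
  · rw [hy]; exact key x c0 hc0pos h
  · obtain ⟨T, ht1, ht2, ht3⟩ := key y (m+2-c0) (by omega) (by omega)
    have z3 : ((c0 + (m+2-c0) : ℕ) : Fin (m+2)) = 0 := by
      apply Fin.ext
      rw [Fin.val_natCast]
      have hz : c0 + (m+2-c0) = m+2 := by omega
      rw [hz, Nat.mod_self, Fin.val_zero]
    have e3 : y + ((m+2-c0 : ℕ) : Fin (m+2)) = x := by
      rw [hy, add_assoc, ← Nat.cast_add, z3, add_zero]
    rw [e3] at ht3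
    exact ⟨T, ht1, ht2, fun w hw => (ht3 w hw).symm⟩

end UB2
section Final
variable (h7 : 7 ≤ m + 2)

lemma card_val_filter (P : ℕ → Prop) [DecidablePred P] :
    ((Finset.univ : Finset (Fin (m+2))).filter (fun x => P x.val)).card
      = ((Finset.range (m+2)).filter P).card := by
  apply Finset.card_bij (fun (x : Fin (m+2)) _ => x.val)
  · intro a ha
    rw [Finset.mem_filter] at ha
    rw [Finset.mem_filter]
    exact ⟨Finset.mem_range.mpr a.isLt, ha.2⟩
  · intro a _ b _ h
    exact Fin.ext h
  · intro b hb
    rw [Finset.mem_filter, Finset.mem_range] at hb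
    exact ⟨⟨b, hb.1⟩, Finset.mem_filter.mpr ⟨Finset.mem_univ _, hb.2⟩, rfl⟩

lemma count2 : ∀ M : ℕ, ((Finset.range M).filter (fun v => v % 2 = 0)).card = (M+1)/2 := by
  intro M
  induction M with
  | zero => simp
  | succ M ih =>
    rw [Finset.range_add_one, Finset.filter_insert]
    by_cases h : M % 2 = 0
    · rw [if_pos h, Finset.card_insert_of_notMem (by simp), ih]; omega
    · rw [if_neg h, ih]; omega

lemma count5 : ∀ M : ℕ, ((Finset.range M).filter (fun v => v % 5 = 0)).card = (M+4)/5 := by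
  intro M
  induction M with
  | zero => simp
  | succ M ih =>
    rw [Finset.range_add_one, Finset.filter_insert]
    by_cases h : M % 5 = 0
    · rw [if_pos h, Finset.card_insert_of_notMem (by simp), ih]; omega
    · rw [if_neg h, ih]; omega

lemma cardA2 : (A2 m).card = (m+2+1)/2 := by
  rw [A2]
  exact (card_val_filter (fun v => v % 2 = 0)).trans (count2 (m+2))

lemma cardA3 : (A3 m).card = (m+2) - (m+2)/5 := by
  rw [A3]
  rw [card_val_filter (fun v => ¬(v % 5 = 0 ∧ v < 5*((m+2)/5)))]
  have hsplit := Finset.card_filter_add_card_filter_not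
    (s := Finset.range (m+2)) (p := fun v => v % 5 = 0 ∧ v < 5*((m+2)/5))
  have heq : (Finset.range (m+2)).filter (fun v => v % 5 = 0 ∧ v < 5*((m+2)/5))
      = (Finset.range (5*((m+2)/5))).filter (fun v => v % 5 = 0) := by
    ext v
    simp only [Finset.mem_filter, Finset.mem_range]
    omega
  have h5 := count5 (5*((m+2)/5))
  rw [heq, h5, Finset.card_range] at hsplit
  have hq : (5*((m+2)/5)+4)/5 = (m+2)/5 := by omega
  rw [hq] at hsplit
  omega

include h7

lemma gen4 : kMetricGen (G m) 4 ↑((Finset.univ : Finset (Fin (m+2))).image some) := by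
  intro u v huv
  cases u with
  | none =>
    cases v with
    | none => exact absurd rfl huv
    | some j =>
      refine none_case h7 _ 4 ?_ j
      rw [Finset.card_univ, Fintype.card_fin]; omega
  | some x =>
    cases v with
    | none =>
      obtain ⟨T, ht1, ht2, ht3⟩ := none_case h7 (Finset.univ : Finset (Fin (m+2))) 4
        (by rw [Finset.card_univ, Fintype.card_fin]; omega) x
      exact ⟨T, ht1, ht2, fun w hw => (ht3 w hw).symm⟩
    | some y =>
      refine rim_wrapper h7 (fun p c hc1 hc2 => core4 h7 p c hc1 hc2) x y ?_
      intro h; exact huv (by rw [h])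

lemma gen3 : kMetricGen (G m) 3 ↑((A3 m).image some) := by
  have hcard : 3 + 2 ≤ (A3 m).card := by rw [cardA3]; omega
  intro u v huv
  cases u with
  | none =>
    cases v with
    | none => exact absurd rfl huv
    | some j => exact none_case h7 _ 3 hcard j
  | some x =>
    cases v with
    | none =>
      obtain ⟨T, ht1, ht2, ht3⟩ := none_case h7 (A3 m) 3 hcard x
      exact ⟨T, ht1, ht2, fun w hw => (ht3 w hw).symm⟩
    | some y =>
      refine rim_wrapper h7 (fun p c hc1 hc2 => core3 h7 (A3 m) (gapA3 h7) p c hc1 hc2) x y ?_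
      intro h; exact huv (by rw [h])

lemma gen2 : kMetricGen (G m) 2 ↑((A2 m).image some) := by
  have hcard : 2 + 2 ≤ (A2 m).card := by rw [cardA2]; omega
  intro u v huv
  cases u with
  | none =>
    cases v with
    | none => exact absurd rfl huv
    | some j => exact none_case h7 _ 2 hcard j
  | some x =>
    cases v with
    | none =>
      obtain ⟨T, ht1, ht2, ht3⟩ := none_case h7 (A2 m) 2 hcard x
      exact ⟨T, ht1, ht2, fun w hw => (ht3 w hw).symm⟩
    | some y =>
      refine rim_wrapper h7 (fun p c hc1 hc2 => core2 h7 p c hc1 hc2) x y ?_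
      intro h; exact huv (by rw [h])

lemma dim_eq (k v : ℕ) (S₀ : Finset (Option (Fin (m+2))))
    (hgen : kMetricGen (G m) k ↑S₀) (hcard : S₀.card = v)
    (hlb : ∀ S : Finset (Option (Fin (m+2))), kMetricGen (G m) k ↑S → v ≤ S.card) :
    kMetricDim (G m) k = v := by
  have hne : {mm | ∃ S : Finset (Option (Fin (m+2))), kMetricGen (G m) k ↑S ∧ S.card = mm}.Nonempty :=
    ⟨v, S₀, hgen, hcard⟩
  rw [kMetricDim]
  apply le_antisymm
  · exact Nat.sInf_le ⟨S₀, hgen, hcard⟩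
  · apply le_csInf hne
    rintro b ⟨S, hS, rfl⟩
    exact hlb S hS

lemma dim2 : kMetricDim (G m) 2 = (m+2+1)/2 := by
  refine dim_eq h7 2 _ ((A2 m).image some) (gen2 h7) ?_ (fun S hS => lb2 h7 hS)
  rw [Finset.card_image_of_injective _ (Option.some_injective _), cardA2]

lemma dim3 : kMetricDim (G m) 3 = (m+2) - (m+2)/5 := by
  refine dim_eq h7 3 _ ((A3 m).image some) (gen3 h7) ?_ (fun S hS => lb3 h7 hS)
  rw [Finset.card_image_of_injective _ (Option.some_injective _), cardA3]

lemma dim4 : kMetricDim (G m) 4 = m+2 := by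
  refine dim_eq h7 4 _ ((Finset.univ : Finset (Fin (m+2))).image some) (gen4 h7) ?_
    (fun S hS => lb4 h7 hS)
  rw [Finset.card_image_of_injective _ (Option.some_injective _), Finset.card_univ,
    Fintype.card_fin]

end Final
end S19

/-- for `n ≥ 7`, `dim₂(W_{1,n}) = ⌈n/2⌉`, `dim₃(W_{1,n}) = n - ⌊n/5⌋` and
`dim₄(W_{1,n}) = n`. -/
theorem stmt_19 (n : ℕ) (hn : 7 ≤ n) :
    kMetricDim (K1join (SimpleGraph.cycleGraph n)) 2 = (n + 1) / 2 ∧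
      kMetricDim (K1join (SimpleGraph.cycleGraph n)) 3 = n - n / 5 ∧
      kMetricDim (K1join (SimpleGraph.cycleGraph n)) 4 = n := by
  obtain ⟨m, rfl⟩ : ∃ m, n = m + 2 := ⟨n - 2, by omega⟩
  exact ⟨S19.dim2 hn, S19.dim3 hn, S19.dim4 hn⟩
end
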